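/- arXiv:1803.06448 — 4 statements merged into one kernel-verified Lean document; each statement's English description precedes it below -/
import Mathlib

section
/- Let K, M be positive integers, D = KM, and let g ∈ ℂ^D be a prototype filter whose frequency-domain version g_f = √D · W_D · g satisfies g_f = Π_D^l · [g_1^T, 0^T_{(K−1)M}]^T for some g_1 ∈ ℂ^M and integer 0 ≤ l < D. Then the GFDM transmitter matrix A satisfies Π_D^{−l} · W_D · A = (1/√K) · Π_{KM} · ( diag(g_1) · Π_M^{−l} · W_M ⊗ I_K ), where ⊗ denotes the Kronecker product. -/
open Matrix Complex

noncomputable section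

/-- The normalized `p`-point DFT matrix `W_p`,
with `[W_p]_{m,n} = exp(-2πi m n / p) / √p`. -/
def dftMat (p : ℕ) : Matrix (Fin p) (Fin p) ℂ :=
  Matrix.of fun m n =>
    Complex.exp (-2 * (Real.pi : ℂ) * Complex.I * (m.val : ℂ) * (n.val : ℂ) / (p : ℂ)) /
      ((Real.sqrt p : ℝ) : ℂ)

/-- `Π_A^s`, the `s`-th (integer) power of the `A×A` cyclic-shift permutation matrix
`Π_A` (whose `(m,n)` entry is `1` iff `m ≡ n+1 (mod A)`).  In general the `(m,n)` entry of
`Π_A^s` is `1` iff `m ≡ n + s (mod A)`; in particular `Π_A = cycPow A 1` and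
`Π_A^{-s} = cycPow A (-s)`. -/
def cycPow (A : ℕ) (s : ℤ) : Matrix (Fin A) (Fin A) ℂ :=
  Matrix.of fun m n => if (m.val : ZMod A) = (n.val : ZMod A) + (s : ZMod A) then 1 else 0

/-- The `AB×AB` permutation matrix `Π_{AB}` with
`[Π_{AB}]_{mB+p, qA+n} = δ_{mn} δ_{pq}` for `0 ≤ m,n < A`, `0 ≤ p,q < B`. -/
def piAB (A B : ℕ) : Matrix (Fin (A * B)) (Fin (A * B)) ℂ :=
  Matrix.of fun i j => if i.val / B = j.val % A ∧ i.val % B = j.val / A then 1 else 0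

/-- Kronecker product, with flat (`Fin (a*c)`) indexing:
`(X ⊗ Y)_{i c + p, j d + q} = X_{i,j} Y_{p,q}`. -/
def kron {a b c d : ℕ} (X : Matrix (Fin a) (Fin b) ℂ) (Y : Matrix (Fin c) (Fin d) ℂ) :
    Matrix (Fin (a * c)) (Fin (b * d)) ℂ :=
  Matrix.of fun i j => X i.divNat j.divNat * Y i.modNat j.modNat

/-- The `R×T` block matrix with blocks `E r t` of size `a×b`, flatly indexed:
block `(r,t)` occupies rows `r*a,…,r*a+a-1` and columns `t*b,…,t*b+b-1`. -/
def blockFlat {R T a b : ℕ} (E : Fin R → Fin T → Matrix (Fin a) (Fin b) ℂ) :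
    Matrix (Fin (R * a)) (Fin (T * b)) ℂ :=
  Matrix.of fun i j => E i.divNat j.divNat i.modNat j.modNat

/-- The block-diagonal matrix `blkdiag({F_k}_{k=0}^{K-1})` whose `k`-th diagonal
block is the `a×b` matrix `F k`. -/
def blkdiag {K a b : ℕ} (F : Fin K → Matrix (Fin a) (Fin b) ℂ) :
    Matrix (Fin (K * a)) (Fin (K * b)) ℂ :=
  Matrix.of fun i j => if i.divNat = j.divNat then F i.divNat i.modNat j.modNat else 0

/-- Index-value-preserving cast between matrix dimensions. -/
def castM {a b c d : ℕ} (h1 : a = c) (h2 : b = d) (X : Matrix (Fin a) (Fin b) ℂ) :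
    Matrix (Fin c) (Fin d) ℂ :=
  Matrix.reindex (finCongr h1) (finCongr h2) X

/-- The length-`D` vector `[g₁ᵀ, 0ᵀ]ᵀ` obtained by padding `g₁ ∈ ℂ^M` with zeros. -/
def pad (D M : ℕ) (g1 : Fin M → ℂ) : Fin D → ℂ :=
  fun i => if h : i.val < M then g1 ⟨i.val, h⟩ else 0

/-- The `k`-th length-`a` segment of a vector `v ∈ ℂ^{K a}`:
`(seg v k) i = v (k*a + i)`. -/
def seg {K a : ℕ} (v : Fin (K * a) → ℂ) (k : Fin K) : Fin a → ℂ :=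
  fun i => v ⟨k.val * a + i.val, by
    have hk := k.isLt
    have hi := i.isLt
    calc k.val * a + i.val < k.val * a + a := by omega
      _ = (k.val + 1) * a := by ring
      _ ≤ K * a := Nat.mul_le_mul_right a hk⟩

/-- The GFDM transmitter matrix of the prototype filter `g ∈ ℂ^{KM}`:
`[A]_{n, mK+k} = [g]_{(n-mK) mod D} · exp(2πi k n / K)` with `D = K M`. -/
def gfdm (K M : ℕ) (hK : 0 < K) (hM : 0 < M) (g : Fin (K * M) → ℂ) :
    Matrix (Fin (K * M)) (Fin (K * M)) ℂ :=
  Matrix.of fun n j =>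
    g ⟨(n.val + K * M - (j.val / K) * K) % (K * M), Nat.mod_lt _ (Nat.mul_pos hK hM)⟩ *
      Complex.exp (2 * (Real.pi : ℂ) * Complex.I * ((j.val % K : ℕ) : ℂ) * (n.val : ℂ) / (K : ℂ))

namespace Stmt1Aux

def eD (D : ℕ) (z : ℤ) : ℂ := Complex.exp (2 * (Real.pi:ℂ) * Complex.I * (z:ℂ) / (D:ℂ))

lemma eD_mul (D : ℕ) (z w : ℤ) : eD D z * eD D w = eD D (z + w) := by
  rw [eD, eD, eD, ← Complex.exp_add]
  congr 1
  push_cast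
  ring

lemma eD_congr {D : ℕ} (hD : 0 < D) {z w : ℤ} (h : z ≡ w [ZMOD (D:ℤ)]) : eD D z = eD D w := by
  obtain ⟨t, ht⟩ := h.dvd
  have hw : (w : ℂ) = z + D * t := by
    have h2 : w = z + D * t := by omega
    rw [h2]; push_cast; ring
  have hD' : (D:ℂ) ≠ 0 := by
    exact Nat.cast_ne_zero.mpr hD.ne'
  rw [eD, eD, hw]
  rw [show 2 * (Real.pi:ℂ) * Complex.I * ((z:ℂ) + D*t) / D
      = 2 * (Real.pi:ℂ) * Complex.I * (z:ℂ) / D + t * (2 * Real.pi * Complex.I) by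
    field_simp]
  rw [Complex.exp_add, Complex.exp_int_mul_two_pi_mul_I, mul_one]

lemma natmod_modEq (D a : ℕ) : ((a % D : ℕ) : ℤ) ≡ (a : ℤ) [ZMOD (D:ℤ)] := by
  have h : ((a % D : ℕ) : ℤ) = (a:ℤ) % (D:ℤ) := by push_cast; ring
  rw [h]
  exact Int.emod_emod_of_dvd _ dvd_rfl

lemma exp_to_eD_neg (D a b : ℕ) :
    Complex.exp (-2 * (Real.pi:ℂ) * Complex.I * (a:ℂ) * (b:ℂ) / (D:ℂ))
      = eD D (-((a:ℤ) * (b:ℤ))) := by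
  rw [eD]; congr 1; push_cast; ring

lemma exp_to_eD_K {K M : ℕ} (hK : 0 < K) (hM : 0 < M) (a b : ℕ) :
    Complex.exp (2 * (Real.pi:ℂ) * Complex.I * (a:ℂ) * (b:ℂ) / (K:ℂ))
      = eD (K*M) ((M:ℤ) * (a:ℤ) * (b:ℤ)) := by
  rw [eD]; congr 1
  have hKc : (K:ℂ) ≠ 0 := Nat.cast_ne_zero.mpr hK.ne'
  have hMc : (M:ℂ) ≠ 0 := Nat.cast_ne_zero.mpr hM.ne'
  push_cast
  field_simp

lemma exp_to_eD_M {K M : ℕ} (hK : 0 < K) (hM : 0 < M) (a b : ℕ) :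
    Complex.exp (-2 * (Real.pi:ℂ) * Complex.I * (a:ℂ) * (b:ℂ) / (M:ℂ))
      = eD (K*M) (-((K:ℤ) * ((a:ℤ) * (b:ℤ)))) := by
  rw [eD]; congr 1
  have hKc : (K:ℂ) ≠ 0 := Nat.cast_ne_zero.mpr hK.ne'
  have hMc : (M:ℂ) ≠ 0 := Nat.cast_ne_zero.mpr hM.ne'
  push_cast
  field_simp

lemma zmod_eq_iff {A : ℕ} (a : Fin A) (b : ℕ) :
    ((a.val : ZMod A) = (b : ZMod A)) ↔ a.val = b % A := by
  rw [ZMod.natCast_eq_natCast_iff]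
  unfold Nat.ModEq
  rw [Nat.mod_eq_of_lt a.isLt]

lemma cycNeg_mul {A : ℕ} (hA : 0 < A) (l : ℕ) (X : Matrix (Fin A) (Fin A) ℂ) (r c : Fin A) :
    (cycPow A (-(l:ℤ)) * X) r c = X ⟨(r.val + l) % A, Nat.mod_lt _ hA⟩ c := by
  rw [Matrix.mul_apply]
  set j0 : Fin A := ⟨(r.val + l) % A, Nat.mod_lt _ hA⟩ with hj0
  have hiff : ∀ j : Fin A,
      ((r.val : ZMod A) = (j.val : ZMod A) + ((-(l:ℤ) : ℤ) : ZMod A)) ↔ j = j0 := by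
    intro j
    have h1 : ((r.val : ZMod A) = (j.val : ZMod A) + ((-(l:ℤ) : ℤ) : ZMod A))
        ↔ (j.val : ZMod A) = ((r.val + l : ℕ) : ZMod A) := by
      push_cast
      constructor
      · intro h; rw [h]; ring
      · intro h; rw [h]; ring
    rw [h1, zmod_eq_iff]
    exact ⟨fun h => Fin.ext h, fun h => by rw [h]⟩
  have hent : ∀ j : Fin A, cycPow A (-(l:ℤ)) r j = if j = j0 then 1 else 0 := by
    intro j
    simp only [cycPow, Matrix.of_apply]
    exact if_congr (hiff j) rfl rfl
  simp only [hent, ite_mul, one_mul, zero_mul]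
  simp

lemma cyc_mulVec {A : ℕ} (hA : 0 < A) {l : ℕ} (hl : l < A) (w : Fin A → ℂ) (u : Fin A) :
    (cycPow A (l:ℤ)).mulVec w u = w ⟨(u.val + (A - l)) % A, Nat.mod_lt _ hA⟩ := by
  rw [Matrix.mulVec]
  show ∑ v, cycPow A (l:ℤ) u v * w v = _
  set v0 : Fin A := ⟨(u.val + (A - l)) % A, Nat.mod_lt _ hA⟩ with hv0
  have hiff : ∀ v : Fin A,
      ((u.val : ZMod A) = (v.val : ZMod A) + (((l:ℤ) : ℤ) : ZMod A)) ↔ v = v0 := by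
    intro v
    have h1 : ((u.val : ZMod A) = (v.val : ZMod A) + (((l:ℤ)) : ZMod A))
        ↔ (v.val : ZMod A) = ((u.val + (A - l) : ℕ) : ZMod A) := by
      have hAl : ((A : ℕ) : ZMod A) = 0 := ZMod.natCast_self A
      rw [Nat.cast_add, Nat.cast_sub hl.le, hAl]
      push_cast
      constructor
      · intro h; rw [h]; ring
      · intro h; rw [h]; ring
    rw [h1, zmod_eq_iff]
    exact ⟨fun h => Fin.ext h, fun h => by rw [h]⟩
  have hent : ∀ v : Fin A, cycPow A (l:ℤ) u v = if v = v0 then 1 else 0 := by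
    intro v
    simp only [cycPow, Matrix.of_apply]
    exact if_congr (hiff v) rfl rfl
  simp only [hent, ite_mul, one_mul, zero_mul]
  simp

def rotEquiv (D : ℕ) (hD : 0 < D) (s : ℕ) : Fin D ≃ Fin D where
  toFun n := ⟨(n.val + s) % D, Nat.mod_lt _ hD⟩
  invFun n := ⟨(n.val + (D - s % D)) % D, Nat.mod_lt _ hD⟩
  left_inv n := by
    apply Fin.ext
    simp only
    rw [Nat.mod_add_mod]
    have hsd := Nat.div_add_mod s D
    have hsm := Nat.mod_lt s hD
    have h : n.val + s + (D - s % D) = n.val + D * (s / D) + D * 1 := by omega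
    rw [h, Nat.add_mul_mod_self_left, Nat.add_mul_mod_self_left, Nat.mod_eq_of_lt n.isLt]
  right_inv n := by
    apply Fin.ext
    simp only
    rw [Nat.mod_add_mod]
    have hsd := Nat.div_add_mod s D
    have hsm := Nat.mod_lt s hD
    have h : n.val + (D - s % D) + s = n.val + D * (s / D) + D * 1 := by omega
    rw [h, Nat.add_mul_mod_self_left, Nat.add_mul_mod_self_left, Nat.mod_eq_of_lt n.isLt]

@[simp] lemma rotEquiv_apply (D : ℕ) (hD : 0 < D) (s : ℕ) (n : Fin D) :
    rotEquiv D hD s n = ⟨(n.val + s) % D, Nat.mod_lt _ hD⟩ := rfl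

lemma idx_cancel {D s n : ℕ} (hD : 0 < D) (hn : n < D) (hs : s < D) :
    ((n + s) % D + D - s) % D = n := by
  rcases Nat.lt_or_ge (n + s) D with h | h
  · rw [Nat.mod_eq_of_lt h]
    have h2 : n + s + D - s = n + D := by omega
    rw [h2, Nat.add_mod_right, Nat.mod_eq_of_lt hn]
  · have h1 : (n + s) % D = n + s - D := by
      rw [Nat.mod_eq_sub_mod h, Nat.mod_eq_of_lt (by omega)]
    rw [h1]
    have h2 : n + s - D + D - s = n := by omega
    rw [h2, Nat.mod_eq_of_lt hn]

lemma piAB_mul {K M : ℕ} (hK : 0 < K) (hM : 0 < M) (X : Matrix (Fin (K*M)) (Fin (K*M)) ℂ)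
    (r c : Fin (K*M)) (hlt : r.val % M * K + r.val / M < K * M) :
    (piAB K M * X) r c = X ⟨r.val % M * K + r.val / M, hlt⟩ c := by
  rw [Matrix.mul_apply]
  set j0 : Fin (K*M) := ⟨r.val % M * K + r.val / M, hlt⟩ with hj0
  have hdiv : r.val / M < K :=
    Nat.div_lt_of_lt_mul (lt_of_lt_of_eq r.isLt (Nat.mul_comm K M))
  have hiff : ∀ j : Fin (K*M),
      (r.val / M = j.val % K ∧ r.val % M = j.val / K) ↔ j = j0 := by
    intro j
    constructor
    · rintro ⟨h1, h2⟩
      apply Fin.ext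
      have hd := Nat.div_add_mod j.val K
      have e1 : r.val % M * K = K * (j.val / K) := by rw [h2]; ring
      simp only [hj0]
      omega
    · rintro rfl
      simp only [hj0]
      constructor
      · rw [mul_comm (r.val % M) K, Nat.mul_add_mod, Nat.mod_eq_of_lt hdiv]
      · rw [mul_comm (r.val % M) K, Nat.mul_add_div hK, Nat.div_eq_of_lt hdiv, add_zero]
  have hent : ∀ j : Fin (K*M), piAB K M r j = if j = j0 then 1 else 0 := by
    intro j
    simp only [piAB, Matrix.of_apply]
    exact if_congr (hiff j) rfl rfl
  simp only [hent, ite_mul, one_mul, zero_mul]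
  simp

lemma pad_val {D M : ℕ} (g1 : Fin M → ℂ) (i j : Fin D) (h : i.val = j.val) :
    pad D M g1 i = pad D M g1 j := by
  cases i; cases j; cases h; rfl

lemma mod_sub_of_between {D x : ℕ} (h1 : D ≤ x) (h2 : x < 2*D) : x % D = x - D := by
  rw [Nat.mod_eq_sub_mod h1, Nat.mod_eq_of_lt (by omega)]

end Stmt1Aux

open Stmt1Aux

/-- if the frequency-domain prototype filter `g_f = √D · W_D · g`
satisfies `g_f = Π_D^l [g₁ᵀ, 0ᵀ_{(K-1)M}]ᵀ` for some `g₁ ∈ ℂ^M` and `0 ≤ l < D`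
(`D = KM`), then the GFDM transmitter matrix `A` satisfies
`Π_D^{-l} · W_D · A = (1/√K) · Π_{KM} · (diag(g₁) · Π_M^{-l} · W_M ⊗ I_K)`. -/
theorem stmt1 (K M : ℕ) (hK : 0 < K) (hM : 0 < M) (g : Fin (K * M) → ℂ)
    (g1 : Fin M → ℂ) (l : ℕ) (hl : l < K * M)
    (hgf : ((Real.sqrt (K * M) : ℝ) : ℂ) • (dftMat (K * M)).mulVec g
      = (cycPow (K * M) (l : ℤ)).mulVec (pad (K * M) M g1)) :
    cycPow (K * M) (-(l : ℤ)) * dftMat (K * M) * gfdm K M hK hM g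
      = (((Real.sqrt K : ℝ) : ℂ))⁻¹ •
        (piAB K M *
          castM (Nat.mul_comm M K) (Nat.mul_comm M K)
            (kron (Matrix.diagonal g1 * cycPow M (-(l : ℤ)) * dftMat M)
              (1 : Matrix (Fin K) (Fin K) ℂ))) := by
  have hD : 0 < K * M := Nat.mul_pos hK hM
  have hDcast : ((K*M : ℕ) : ℤ) = (K:ℤ) * M := by push_cast; ring
  have hsqD : ((Real.sqrt ((K*M : ℕ)) : ℝ) : ℂ) ≠ 0 := by
    rw [Complex.ofReal_ne_zero, Real.sqrt_ne_zero']
    exact_mod_cast hD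
  have hsqK : ((Real.sqrt K : ℝ) : ℂ) ≠ 0 := by
    rw [Complex.ofReal_ne_zero, Real.sqrt_ne_zero']
    exact_mod_cast hK
  have hsqM : ((Real.sqrt M : ℝ) : ℂ) ≠ 0 := by
    rw [Complex.ofReal_ne_zero, Real.sqrt_ne_zero']
    exact_mod_cast hM
  have hsplit : ((Real.sqrt ((K*M:ℕ)) : ℝ) : ℂ)
      = ((Real.sqrt K : ℝ) : ℂ) * ((Real.sqrt M : ℝ) : ℂ) := by
    rw [← Complex.ofReal_mul]
    congr 1
    rw [← Real.sqrt_mul (Nat.cast_nonneg K)]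
    norm_cast
  -- pointwise form of the hypothesis
  have hpt : ∀ u : Fin (K*M),
      (∑ n : Fin (K*M), eD (K*M) (-((u.val:ℤ) * (n.val:ℤ))) * g n)
      = pad (K*M) M g1 ⟨(u.val + (K*M - l)) % (K*M), Nat.mod_lt _ hD⟩ := by
    intro u
    have h := congrFun hgf u
    rw [cyc_mulVec hD hl] at h
    rw [← h, Pi.smul_apply, Matrix.mulVec, dotProduct, smul_eq_mul, Finset.mul_sum]
    refine Finset.sum_congr rfl fun n _ => ?_
    rw [dftMat]
    simp only [Matrix.of_apply]
    rw [exp_to_eD_neg (K*M) u.val n.val]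
    field_simp
    push_cast
    rfl
  ext r c
  -- basic facts about indices
  have hmlt : c.val / K < M := Nat.div_lt_of_lt_mul c.isLt
  have hklt : c.val % K < K := Nat.mod_lt _ hK
  have hkM : c.val % K * M < K * M := (Nat.mul_lt_mul_right hM).mpr hklt
  have hmK : c.val / K * K < K * M := by
    calc c.val / K * K ≤ c.val := Nat.div_mul_le_self _ _
      _ < K * M := c.isLt
  -- LHS
  rw [Matrix.mul_apply]
  simp only [cycNeg_mul hD l (dftMat (K*M)) r]
  set r' : Fin (K*M) := ⟨(r.val + l) % (K*M), Nat.mod_lt _ hD⟩ with hr'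
  set u : Fin (K*M) := ⟨(r.val + l + (K*M - c.val % K * M)) % (K*M), Nat.mod_lt _ hD⟩ with hu
  -- congruence facts
  have h1 : ((r'.val : ℕ) : ℤ) ≡ (r.val:ℤ) + (l:ℤ) [ZMOD ((K*M:ℕ):ℤ)] := by
    have hx := natmod_modEq (K*M) (r.val + l)
    have hc : ((r.val + l : ℕ):ℤ) = (r.val:ℤ) + (l:ℤ) := by push_cast; ring
    rw [hc] at hx
    simp only [hr']
    exact hx
  have h3 : ((u.val : ℕ) : ℤ) ≡ (r.val:ℤ) + (l:ℤ) - ((c.val % K : ℕ):ℤ) * (M:ℤ)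
      [ZMOD ((K*M:ℕ):ℤ)] := by
    have hx := natmod_modEq (K*M) (r.val + l + (K*M - c.val % K * M))
    have hc : ((r.val + l + (K*M - c.val % K * M) : ℕ):ℤ)
        = ((r.val:ℤ) + (l:ℤ) - ((c.val % K : ℕ):ℤ) * (M:ℤ)) + ((K*M:ℕ):ℤ) := by
      push_cast [Nat.cast_sub hkM.le]
      ring
    rw [hc] at hx
    simp only [hu]
    refine hx.trans ?_
    exact Int.ModEq.symm (Int.modEq_iff_dvd.mpr ⟨1, by ring⟩)
  -- per-term rewriting of the LHS sum
  have hsum : (∑ j : Fin (K*M), dftMat (K*M) r' j * gfdm K M hK hM g j c)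
      = ∑ n : Fin (K*M),
          eD (K*M) (-((u.val:ℤ) * ((c.val / K * K : ℕ):ℤ))) / ((Real.sqrt ((K*M:ℕ)) : ℝ) : ℂ) *
            (eD (K*M) (-((u.val:ℤ) * (n.val:ℤ))) * g n) := by
    rw [← Equiv.sum_comp (rotEquiv (K*M) hD (c.val / K * K))
      (fun j => dftMat (K*M) r' j * gfdm K M hK hM g j c)]
    refine Finset.sum_congr rfl fun n _ => ?_
    simp only [rotEquiv_apply, dftMat, gfdm, Matrix.of_apply]
    set σn : ℕ := (n.val + c.val / K * K) % (K*M) with hσn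
    have hgn : g ⟨(σn + K * M - c.val / K * K) % (K*M), Nat.mod_lt _ hD⟩ = g n := by
      congr 1
      exact Fin.ext (idx_cancel hD n.isLt hmK)
    rw [hgn, exp_to_eD_neg (K*M) r'.val σn, exp_to_eD_K hK hM (c.val % K) σn]
    have h2 : ((σn : ℕ) : ℤ) ≡ (n.val:ℤ) + ((c.val / K * K : ℕ):ℤ) [ZMOD ((K*M:ℕ):ℤ)] := by
      have hx := natmod_modEq (K*M) (n.val + c.val / K * K)
      have hc : ((n.val + c.val / K * K : ℕ):ℤ) = (n.val:ℤ) + ((c.val / K * K : ℕ):ℤ) := by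
        push_cast; ring
      rw [hc] at hx
      exact hx
    have key : eD (K*M) (-((r'.val:ℤ) * (σn:ℤ))) * eD (K*M) ((M:ℤ) * ((c.val % K : ℕ):ℤ) * (σn:ℤ))
        = eD (K*M) (-((u.val:ℤ) * ((c.val / K * K : ℕ):ℤ)))
            * eD (K*M) (-((u.val:ℤ) * (n.val:ℤ))) := by
      rw [eD_mul, eD_mul]
      apply eD_congr hD
      have hA : (-((r'.val:ℤ) * (σn:ℤ)) + (M:ℤ) * ((c.val % K : ℕ):ℤ) * (σn:ℤ))
          ≡ ((M:ℤ) * ((c.val % K:ℕ):ℤ) - ((r.val:ℤ) + l)) * ((n.val:ℤ) + ((c.val / K * K : ℕ):ℤ))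
            [ZMOD ((K*M:ℕ):ℤ)] := by
        have he : (-((r'.val:ℤ) * (σn:ℤ)) + (M:ℤ) * ((c.val % K : ℕ):ℤ) * (σn:ℤ))
            = ((M:ℤ) * ((c.val % K:ℕ):ℤ) - (r'.val:ℤ)) * (σn:ℤ) := by ring
        rw [he]
        exact (Int.ModEq.sub Int.ModEq.rfl h1).mul h2
      have hB : (-((u.val:ℤ) * ((c.val / K * K : ℕ):ℤ)) + -((u.val:ℤ) * (n.val:ℤ)))
          ≡ ((M:ℤ) * ((c.val % K:ℕ):ℤ) - ((r.val:ℤ) + l)) * ((n.val:ℤ) + ((c.val / K * K : ℕ):ℤ))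
            [ZMOD ((K*M:ℕ):ℤ)] := by
        have he : (-((u.val:ℤ) * ((c.val / K * K : ℕ):ℤ)) + -((u.val:ℤ) * (n.val:ℤ)))
            = (-(u.val:ℤ)) * ((n.val:ℤ) + ((c.val / K * K : ℕ):ℤ)) := by ring
        rw [he]
        refine (h3.neg.mul (Int.ModEq.refl ((n.val:ℤ) + ((c.val / K * K : ℕ):ℤ)))).trans ?_
        have he2 : (-((r.val:ℤ) + (l:ℤ) - ((c.val % K : ℕ):ℤ) * (M:ℤ)))
              * ((n.val:ℤ) + ((c.val / K * K : ℕ):ℤ))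
            = ((M:ℤ) * ((c.val % K:ℕ):ℤ) - ((r.val:ℤ) + l))
              * ((n.val:ℤ) + ((c.val / K * K : ℕ):ℤ)) := by ring
        rw [he2]
      exact hA.trans hB.symm
    rw [div_mul_eq_mul_div, div_mul_eq_mul_div]
    congr 1
    linear_combination g n * key
  rw [hsum, ← Finset.mul_sum, hpt u]
  -- simplify the pad index
  have hw0 : (u.val + (K*M - l)) % (K*M) = (r.val + (K*M - c.val % K * M)) % (K*M) := by
    simp only [hu]
    rw [Nat.mod_add_mod]
    have h : r.val + l + (K*M - c.val % K * M) + (K*M - l)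
        = (r.val + (K*M - c.val % K * M)) + K*M := by omega
    rw [h, Nat.add_mod_right]
  rw [pad_val g1 _ ⟨(r.val + (K*M - c.val % K * M)) % (K*M), Nat.mod_lt _ hD⟩ hw0]
  -- RHS
  have hdiv : r.val / M < K :=
    Nat.div_lt_of_lt_mul (lt_of_lt_of_eq r.isLt (Nat.mul_comm K M))
  have hsM : r.val % M < M := Nat.mod_lt _ hM
  have hj0lt : r.val % M * K + r.val / M < K * M := by
    calc r.val % M * K + r.val / M < r.val % M * K + K := by omega
      _ = (r.val % M + 1) * K := by ring
      _ ≤ M * K := Nat.mul_le_mul_right K hsM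
      _ = K * M := Nat.mul_comm M K
  rw [Matrix.smul_apply, piAB_mul hK hM _ r c hj0lt, smul_eq_mul]
  simp only [castM, Matrix.reindex_apply, Matrix.submatrix_apply, finCongr_symm, finCongr_apply,
    kron, Matrix.of_apply]
  have hd1 : (r.val % M * K + r.val / M) / K = r.val % M := by
    rw [mul_comm (r.val % M) K, Nat.mul_add_div hK, Nat.div_eq_of_lt hdiv, add_zero]
  have hd2 : (r.val % M * K + r.val / M) % K = r.val / M := by
    rw [mul_comm (r.val % M) K, Nat.mul_add_mod, Nat.mod_eq_of_lt hdiv]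
  have hdN : (Fin.cast (Nat.mul_comm M K).symm
        (⟨r.val % M * K + r.val / M, hj0lt⟩ : Fin (K*M)) : Fin (M*K)).divNat
      = ⟨r.val % M, hsM⟩ := by
    apply Fin.ext
    simp [Fin.divNat, Fin.cast, hd1]
  have hmN : (Fin.cast (Nat.mul_comm M K).symm
        (⟨r.val % M * K + r.val / M, hj0lt⟩ : Fin (K*M)) : Fin (M*K)).modNat
      = ⟨r.val / M, hdiv⟩ := by
    apply Fin.ext
    simp [Fin.modNat, Fin.cast, hd2]
  have hdc : (Fin.cast (Nat.mul_comm M K).symm c : Fin (M*K)).divNat = ⟨c.val / K, hmlt⟩ := by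
    apply Fin.ext
    simp [Fin.divNat, Fin.cast]
  have hmc : (Fin.cast (Nat.mul_comm M K).symm c : Fin (M*K)).modNat = ⟨c.val % K, hklt⟩ := by
    apply Fin.ext
    simp [Fin.modNat, Fin.cast]
  rw [hdN, hmN, hdc, hmc]
  rw [Matrix.mul_assoc, Matrix.diagonal_mul, cycNeg_mul hM l (dftMat M)]
  rw [Matrix.one_apply]
  by_cases hqk : r.val / M = c.val % K
  · -- diagonal case
    rw [if_pos (Fin.ext hqk)]
    have hrdm := Nat.div_add_mod r.val M
    have hw1 : (r.val + (K*M - c.val % K * M)) % (K*M) = r.val % M := by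
      have hMq : M * (r.val / M) = c.val % K * M := by rw [← hqk]; ring
      have h : r.val + (K*M - c.val % K * M) = r.val % M + K*M := by omega
      rw [h, Nat.add_mod_right,
        Nat.mod_eq_of_lt (lt_of_lt_of_le hsM (Nat.le_mul_of_pos_left M hK))]
    rw [pad_val g1 _ ⟨r.val % M, lt_of_lt_of_le hsM (Nat.le_mul_of_pos_left M hK)⟩ hw1]
    rw [pad]
    simp only
    rw [dif_pos hsM]
    simp only [dftMat, Matrix.of_apply]
    rw [exp_to_eD_M hK hM ((r.val % M + l) % M) (c.val / K)]
    -- key2 : the exponents agree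
    have hu_modM : ((u.val : ℕ) : ℤ) ≡ (((r.val % M + l) % M : ℕ) : ℤ) [ZMOD (M:ℤ)] := by
      have hdvd : (M:ℤ) ∣ ((K*M:ℕ):ℤ) := by
        rw [hDcast]; exact dvd_mul_left _ _
      have h3M := Int.ModEq.of_dvd hdvd h3
      refine h3M.trans ?_
      have hstep : (r.val:ℤ) + (l:ℤ) - ((c.val % K : ℕ):ℤ) * (M:ℤ)
          ≡ ((r.val % M + l : ℕ):ℤ) [ZMOD (M:ℤ)] := by
        apply Int.modEq_iff_dvd.mpr
        have hr2 : (r.val:ℤ) = (M:ℤ) * ((r.val / M : ℕ):ℤ) + ((r.val % M : ℕ):ℤ) := by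
          exact_mod_cast (Nat.div_add_mod r.val M).symm
        refine ⟨((c.val % K : ℕ):ℤ) - ((r.val / M : ℕ):ℤ), ?_⟩
        have hcast : ((r.val % M + l : ℕ):ℤ) = ((r.val % M : ℕ):ℤ) + (l:ℤ) := Nat.cast_add _ _
        rw [hcast, hr2]
        ring
      exact hstep.trans (natmod_modEq M (r.val % M + l)).symm
    have key2 : eD (K*M) (-((u.val:ℤ) * ((c.val / K * K : ℕ):ℤ)))
        = eD (K*M) (-((K:ℤ) * (((((r.val % M + l) % M : ℕ)):ℤ) * ((c.val / K : ℕ):ℤ)))) := by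
      apply eD_congr hD
      apply Int.ModEq.neg
      have he : ((u.val:ℤ) * ((c.val / K * K : ℕ):ℤ)) = (K:ℤ) * ((u.val:ℤ) * ((c.val / K:ℕ):ℤ)) := by
        push_cast; ring
      rw [he, hDcast]
      exact Int.ModEq.mul_left' (hu_modM.mul_right ((c.val / K : ℕ):ℤ))
    rw [key2, hsplit]
    field_simp
  · -- off-diagonal case
    rw [if_neg (fun h => hqk (congrArg Fin.val h))]
    have hrdm := Nat.div_add_mod r.val M
    have hcm : M * (c.val % K) = c.val % K * M := Nat.mul_comm _ _
    have hKM : M * K = K * M := Nat.mul_comm _ _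
    have hwge : ¬ ((r.val + (K*M - c.val % K * M)) % (K*M) < M) := by
      rcases Nat.lt_or_ge (r.val / M) (c.val % K) with hlt2 | hge2
      · -- r/M < c%K : the argument is below K*M
        have h1 : M * (r.val / M) + M ≤ M * (c.val % K) := by
          have := Nat.mul_le_mul_left M (Nat.succ_le_of_lt hlt2)
          rwa [Nat.mul_succ] at this
        have h2 : M * (c.val % K) + M ≤ M * K := by
          have := Nat.mul_le_mul_left M (Nat.succ_le_of_lt hklt)
          rwa [Nat.mul_succ] at this
        have harg : r.val + (K*M - c.val % K * M) < K*M := by omega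
        rw [Nat.mod_eq_of_lt harg]
        omega
      · -- c%K < r/M : the argument is in [K*M, 2*K*M)
        have hlt2 : c.val % K < r.val / M := by omega
        have h1 : M * (c.val % K) + M ≤ M * (r.val / M) := by
          have := Nat.mul_le_mul_left M (Nat.succ_le_of_lt hlt2)
          rwa [Nat.mul_succ] at this
        have hargge : K*M ≤ r.val + (K*M - c.val % K * M) := by omega
        have harglt : r.val + (K*M - c.val % K * M) < 2*(K*M) := by
          have := r.isLt
          omega
        rw [mod_sub_of_between hargge harglt]
        omega
    rw [pad]
    simp only
    rw [dif_neg hwge]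
    simp
end
end

section
/- Let K, M be positive integers, D = KM, and let g ∈ ℂ^D be a prototype filter whose frequency-domain version g_f = √D · W_D · g satisfies g_f = Π_D^l · [g_1^T, 0^T_{(K−1)M}]^T for some g_1 ∈ ℂ^M and integer 0 ≤ l < D. Let H ∈ ℂ^{D×D} be any circulant matrix with first column h, and let h_f = √D · W_D · h. Then Π_D^{−l} · W_D · H · A = blkdiag({E_k}_{k=0}^{K−1}) · Π_{KM}, where for each 0 ≤ k < K the M×M matrix E_k = (1/√K) · diag( [I_M selecting rows kM, …, kM+M−1 of Π_D^{−l} h_f] ) · diag(g_1) · Π_M^{−l} · W_M, i.e., E_k is (1/√K) times the diagonal matrix formed by the k-th length-M segment of Π_D^{−l} h_f, multiplied by diag(g_1) · Π_M^{−l} · W_M. -/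
open Matrix Complex

noncomputable section

noncomputable def cc (D : ℕ) (t : ℤ) : ℂ :=
  Complex.exp (-2 * (Real.pi : ℂ) * Complex.I * (t : ℂ) / (D : ℂ))

lemma cc_add (D : ℕ) (a b : ℤ) : cc D (a + b) = cc D a * cc D b := by
  unfold cc
  rw [← Complex.exp_add]
  congr 1
  push_cast
  ring

lemma cc_self_mul (D : ℕ) (hD : 0 < D) (q : ℤ) : cc D ((D : ℤ) * q) = 1 := by
  unfold cc
  have hDne : (D : ℂ) ≠ 0 := Nat.cast_ne_zero.mpr hD.ne'
  have hq : (-2 * (Real.pi : ℂ) * Complex.I * (((D : ℤ) * q : ℤ) : ℂ) / (D : ℂ))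
      = ((-q : ℤ) : ℂ) * (2 * (Real.pi : ℂ) * Complex.I) := by
    field_simp
    push_cast; ring
  rw [hq, Complex.exp_int_mul_two_pi_mul_I]

lemma cc_period (D : ℕ) (hD : 0 < D) (a q : ℤ) : cc D (a + (D : ℤ) * q) = cc D a := by
  rw [cc_add, cc_self_mul D hD, mul_one]

lemma cc_congr (D : ℕ) (hD : 0 < D) (a b : ℤ) (h : a % (D : ℤ) = b % (D : ℤ)) :
    cc D a = cc D b := by
  obtain ⟨q, hq⟩ : (D : ℤ) ∣ b - a := Int.ModEq.dvd h
  have hb : b = a + (D : ℤ) * q := by linarith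
  rw [hb, cc_period D hD]

lemma cc_mod_mul (K M : ℕ) (hK : 0 < K) (hM : 0 < M) (a b c : ℤ)
    (hab : a % (M : ℤ) = b % (M : ℤ)) :
    cc (K * M) (a * c * K) = cc (K * M) (b * c * K) := by
  obtain ⟨t, ht⟩ : (M : ℤ) ∣ b - a := Int.ModEq.dvd hab
  apply cc_congr (K * M) (Nat.mul_pos hK hM)
  have hb : b * c * K = a * c * K + ((K * M : ℕ) : ℤ) * (t * c) := by
    push_cast
    linear_combination (c * (K : ℤ)) * ht
  rw [hb, Int.add_mul_emod_self_left]

lemma int_mod_add_self (D : ℕ) (a : ℤ) : (a + (D : ℤ)) % (D : ℤ) = a % (D : ℤ) := by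
  simpa using Int.add_mul_emod_self_left a (D : ℤ) 1

lemma cycPow_neg_apply (A : ℕ) (hA : 0 < A) (l : ℕ) (m n : Fin A) :
    cycPow A (-(l:ℤ)) m n = if n = (⟨(m.val + l) % A, Nat.mod_lt _ hA⟩ : Fin A) then 1 else 0 := by
  haveI : NeZero A := ⟨hA.ne'⟩
  unfold cycPow
  rw [Matrix.of_apply]
  congr 1
  rw [eq_iff_iff]
  have h1 : (((-(l:ℤ)) : ℤ) : ZMod A) = -(l : ZMod A) := by push_cast; ring
  rw [h1]
  constructor
  · intro h
    have h2 : (n.val : ZMod A) = ((m.val + l : ℕ) : ZMod A) := by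
      push_cast
      linear_combination -h
    rw [ZMod.natCast_eq_natCast_iff'] at h2
    exact Fin.ext (by rw [Nat.mod_eq_of_lt n.isLt] at h2; exact h2)
  · intro h
    subst h
    push_cast [ZMod.natCast_mod]
    ring

lemma cycPow_pos_apply (A : ℕ) (hA : 0 < A) (l : ℕ) (hl : l ≤ A) (m n : Fin A) :
    cycPow A (l:ℤ) m n
      = if n = (⟨(m.val + (A - l)) % A, Nat.mod_lt _ hA⟩ : Fin A) then 1 else 0 := by
  haveI : NeZero A := ⟨hA.ne'⟩
  unfold cycPow
  rw [Matrix.of_apply]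
  congr 1
  rw [eq_iff_iff]
  have h1 : (((l:ℤ)) : ZMod A) = (l : ZMod A) := by push_cast; ring
  rw [h1]
  have hAl : ((A - l : ℕ) : ZMod A) = -(l : ZMod A) := by
    rw [eq_neg_iff_add_eq_zero, ← Nat.cast_add]
    have h2 : A - l + l = A := by omega
    rw [h2, ZMod.natCast_self]
  constructor
  · intro h
    have h2 : (n.val : ZMod A) = ((m.val + (A - l) : ℕ) : ZMod A) := by
      push_cast [hAl]
      linear_combination -h
    rw [ZMod.natCast_eq_natCast_iff'] at h2
    exact Fin.ext (by rw [Nat.mod_eq_of_lt n.isLt] at h2; exact h2)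
  · intro h
    subst h
    push_cast [ZMod.natCast_mod, hAl]
    ring

lemma sum_ite_one_mul {A : ℕ} (b : Fin A) (f : Fin A → ℂ) :
    (∑ n : Fin A, (if n = b then (1:ℂ) else 0) * f n) = f b := by
  rw [Finset.sum_eq_single b]
  · simp
  · intro c _ hc; simp [hc]
  · intro h; simp at h

lemma sum_mul_ite_one {A : ℕ} (b : Fin A) (f : Fin A → ℂ) :
    (∑ n : Fin A, f n * (if n = b then (1:ℂ) else 0)) = f b := by
  rw [Finset.sum_eq_single b]
  · simp
  · intro c _ hc; simp [hc]
  · intro h; simp at h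

lemma cycPow_neg_mul_apply (A : ℕ) (hA : 0 < A) (l : ℕ) (X : Matrix (Fin A) (Fin A) ℂ)
    (i : Fin A) (j : Fin A) :
    (cycPow A (-(l:ℤ)) * X) i j = X ⟨(i.val + l) % A, Nat.mod_lt _ hA⟩ j := by
  rw [Matrix.mul_apply]
  simp_rw [cycPow_neg_apply A hA l]
  exact sum_ite_one_mul _ _

lemma cycPow_neg_mulVec (A : ℕ) (hA : 0 < A) (l : ℕ) (v : Fin A → ℂ) (i : Fin A) :
    (cycPow A (-(l:ℤ))).mulVec v i = v ⟨(i.val + l) % A, Nat.mod_lt _ hA⟩ := by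
  simp only [Matrix.mulVec, dotProduct]
  simp_rw [cycPow_neg_apply A hA l]
  exact sum_ite_one_mul _ _

lemma cycPow_pos_mulVec (A : ℕ) (hA : 0 < A) (l : ℕ) (hl : l ≤ A) (v : Fin A → ℂ) (i : Fin A) :
    (cycPow A (l:ℤ)).mulVec v i = v ⟨(i.val + (A - l)) % A, Nat.mod_lt _ hA⟩ := by
  simp only [Matrix.mulVec, dotProduct]
  simp_rw [cycPow_pos_apply A hA l hl]
  exact sum_ite_one_mul _ _

lemma dftMat_apply_cc (p : ℕ) (m n : Fin p) :
    dftMat p m n = cc p ((m.val : ℤ) * (n.val : ℤ)) / ((Real.sqrt p : ℝ) : ℂ) := by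
  unfold dftMat cc
  rw [Matrix.of_apply]
  congr 2
  push_cast
  ring

lemma cc_scale (K M : ℕ) (hK : 0 < K) (hM : 0 < M) (x : ℤ) :
    cc M x = cc (K * M) (x * K) := by
  unfold cc
  congr 1
  have hKne : (K : ℂ) ≠ 0 := Nat.cast_ne_zero.mpr hK.ne'
  have hMne : (M : ℂ) ≠ 0 := Nat.cast_ne_zero.mpr hM.ne'
  push_cast
  field_simp

lemma index_lemma (K M i k : ℕ) (hM : 0 < M) (hi : i < K * M) (hk : k < K) :
    (i / M = k → (i + (K * M - k * M)) % (K * M) = i % M) ∧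
      (i / M ≠ k → M ≤ (i + (K * M - k * M)) % (K * M)) := by
  have hd := Nat.div_add_mod i M
  have hr : i % M < M := Nat.mod_lt _ hM
  have hq : i / M < K := by rw [Nat.div_lt_iff_lt_mul hM]; omega
  have hkK : k * M ≤ K * M := Nat.mul_le_mul_right M (le_of_lt hk)
  have hk1 : (k + 1) * M ≤ K * M := Nat.mul_le_mul_right M hk
  have hk1e : (k + 1) * M = k * M + M := by ring
  have hMK : M ≤ K * M := by
    calc M = 1 * M := (one_mul M).symm
    _ ≤ K * M := Nat.mul_le_mul_right M (by omega)
  constructor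
  · intro hqe
    have hcm : M * (i / M) = k * M := by rw [hqe]; ring
    have he : i + (K * M - k * M) = i % M + K * M := by omega
    rw [he, Nat.add_mod_right, Nat.mod_eq_of_lt (lt_of_lt_of_le hr hMK)]
  · intro hne
    rcases Nat.lt_or_ge (i / M) k with hlt | hge
    · have h1 : (i / M + 1) * M ≤ k * M := Nat.mul_le_mul_right M hlt
      have h2 : (i / M + 1) * M = M * (i / M) + M := by ring
      have hik : i < k * M := by omega
      have hlt2 : i + (K * M - k * M) < K * M := by omega
      rw [Nat.mod_eq_of_lt hlt2]
      omega
    · have hgt : k < i / M := by omega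
      have h1 : (k + 1) * M ≤ (i / M) * M := Nat.mul_le_mul_right M hgt
      have h2 : (i / M) * M = M * (i / M) := by ring
      have hik : k * M + M ≤ i := by omega
      have he : i + (K * M - k * M) = (i - k * M) + K * M := by omega
      rw [he, Nat.add_mod_right, Nat.mod_eq_of_lt (by omega)]
      omega

/-- under the ICI-free hypothesis on `g`, for any circulant channel
matrix `H` with first column `h` and `h_f = √D · W_D · h`, one has
`Π_D^{-l} · W_D · H · A = blkdiag({E_k}_{k=0}^{K-1}) · Π_{KM}` with
`E_k = (1/√K) · diag(k-th length-M segment of Π_D^{-l} h_f) · diag(g₁) · Π_M^{-l} · W_M`. -/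
theorem stmt2 (K M : ℕ) (hK : 0 < K) (hM : 0 < M) (g : Fin (K * M) → ℂ)
    (g1 : Fin M → ℂ) (l : ℕ) (hl : l < K * M)
    (hgf : ((Real.sqrt (K * M) : ℝ) : ℂ) • (dftMat (K * M)).mulVec g
      = (cycPow (K * M) (l : ℤ)).mulVec (pad (K * M) M g1))
    (h : Fin (K * M) → ℂ) (H : Matrix (Fin (K * M)) (Fin (K * M)) ℂ)
    (hH : H = Matrix.circulant h) :
    cycPow (K * M) (-(l : ℤ)) * dftMat (K * M) * H * gfdm K M hK hM g
      = blkdiag (fun k : Fin K =>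
          (((Real.sqrt K : ℝ) : ℂ))⁻¹ •
            (Matrix.diagonal
                (seg ((cycPow (K * M) (-(l : ℤ))).mulVec
                  (((Real.sqrt (K * M) : ℝ) : ℂ) • (dftMat (K * M)).mulVec h)) k) *
              Matrix.diagonal g1 * cycPow M (-(l : ℤ)) * dftMat M)) *
        piAB K M := by
  subst hH
  have hD : 0 < K * M := Nat.mul_pos hK hM
  haveI : NeZero (K * M) := ⟨hD.ne'⟩
  have hsDpos : (0:ℝ) < Real.sqrt (K * M) := Real.sqrt_pos.mpr (by positivity)
  have hsD : ((Real.sqrt (K * M) : ℝ) : ℂ) ≠ 0 := by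
    simp only [ne_eq, Complex.ofReal_eq_zero]; exact hsDpos.ne'
  have hsplit : ((Real.sqrt (K * M) : ℝ) : ℂ)
      = ((Real.sqrt K : ℝ) : ℂ) * ((Real.sqrt M : ℝ) : ℂ) := by
    rw [← Complex.ofReal_mul]
    congr 1
    exact Real.sqrt_mul (by positivity) _
  have hsK : ((Real.sqrt K : ℝ) : ℂ) ≠ 0 := by
    simp only [ne_eq, Complex.ofReal_eq_zero]
    exact (Real.sqrt_pos.mpr (by positivity)).ne'
  have hsM : ((Real.sqrt M : ℝ) : ℂ) ≠ 0 := by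
    simp only [ne_eq, Complex.ofReal_eq_zero]
    exact (Real.sqrt_pos.mpr (by positivity)).ne'
  have hvec : ∀ (v : Fin (K*M) → ℂ) (t : Fin (K*M)),
      ((Real.sqrt (K*M) : ℝ) : ℂ) * (dftMat (K*M)).mulVec v t
        = ∑ s : Fin (K*M), cc (K*M) ((t.val : ℤ) * (s.val : ℤ)) * v s := by
    intro v t
    simp only [Matrix.mulVec, dotProduct, Finset.mul_sum]
    refine Finset.sum_congr rfl fun s _ => ?_
    rw [dftMat_apply_cc]
    push_cast
    field_simp
  have hgf' : ∀ t : Fin (K*M),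
      (∑ s : Fin (K*M), cc (K*M) ((t.val : ℤ) * (s.val : ℤ)) * g s)
        = pad (K*M) M g1 ⟨(t.val + (K*M - l)) % (K*M), Nat.mod_lt _ hD⟩ := by
    intro t
    rw [← hvec g t]
    have h1 := congrFun hgf t
    rw [Pi.smul_apply, smul_eq_mul] at h1
    rw [h1, cycPow_pos_mulVec (K*M) hD l (le_of_lt hl)]
  ext i j
  have hkK : j.val % K < K := Nat.mod_lt _ hK
  have hmM : j.val / K < M := by
    rw [Nat.div_lt_iff_lt_mul hK, mul_comm M K]; exact j.isLt
  have hkMle : (j.val % K) * M ≤ K * M := Nat.mul_le_mul_right M (le_of_lt hkK)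
  have hmKlt : (j.val / K) * K < K * M := by
    have h1 : (j.val / K + 1) * K ≤ M * K := Nat.mul_le_mul_right K hmM
    have h2 : (j.val / K + 1) * K = (j.val / K) * K + K := by ring
    have h3 : M * K = K * M := Nat.mul_comm M K
    omega
  have hr0lt : (i.val + (K*M - (j.val % K) * M)) % (K*M) < K*M := Nat.mod_lt _ hD
  trans ((∑ s : Fin (K*M), cc (K*M) (((((i.val + l) % (K*M) : ℕ)) : ℤ) * (s.val : ℤ)) * h s)
      * cc (K*M) ((((((i.val + l) % (K*M) : ℕ)) : ℤ) - ((j.val % K : ℕ) : ℤ) * (M : ℤ))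
          * (((j.val / K : ℕ) : ℤ) * (K : ℤ)))
      * pad (K*M) M g1 ⟨(i.val + (K*M - (j.val % K) * M)) % (K*M), hr0lt⟩
      / ((Real.sqrt (K*M) : ℝ) : ℂ))
  · -- LHS = X
    rw [Matrix.mul_assoc, Matrix.mul_assoc, cycPow_neg_mul_apply (K*M) hD l, Matrix.mul_apply]
    simp_rw [Matrix.mul_apply, Matrix.circulant_apply, Finset.mul_sum]
    rw [Finset.sum_comm]
    set u : ℤ := (((i.val + l) % (K*M) : ℕ) : ℤ) - ((j.val % K : ℕ) : ℤ) * (M:ℤ) with hu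
    have hccsplit : ∀ (a : ℕ) (c s : Fin (K*M)),
        cc (K*M) ((a:ℤ) * (((c+s : Fin (K*M))).val : ℤ))
          = cc (K*M) ((a:ℤ) * (c.val:ℤ)) * cc (K*M) ((a:ℤ) * (s.val:ℤ)) := by
      intro a c s
      rw [← cc_add]
      apply cc_congr (K*M) hD
      rw [Fin.val_add, Int.natCast_mod]
      rw [Int.mul_emod, Int.emod_emod_of_dvd _ dvd_rfl, ← Int.mul_emod]
      congr 1
      push_cast
      ring
    have hstep : ∀ c : Fin (K*M),
        (∑ b : Fin (K*M), dftMat (K*M) (⟨(i.val + l) % (K*M), Nat.mod_lt _ hD⟩ : Fin (K*M)) b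
            * (h (b - c) * gfdm K M hK hM g c j))
          = (∑ s : Fin (K*M), cc (K*M) (((((i.val + l) % (K*M) : ℕ)) : ℤ) * (s.val:ℤ)) * h s)
            * (cc (K*M) (((((i.val + l) % (K*M) : ℕ)) : ℤ) * (c.val : ℤ))
                * gfdm K M hK hM g c j) / ((Real.sqrt (K*M) : ℝ) : ℂ) := by
      intro c
      rw [← Fintype.sum_equiv (Equiv.addLeft c)
        (fun s : Fin (K*M) => dftMat (K*M) ⟨(i.val + l) % (K*M), Nat.mod_lt _ hD⟩ (c + s)
            * (h s * gfdm K M hK hM g c j))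
        (fun b : Fin (K*M) => dftMat (K*M) ⟨(i.val + l) % (K*M), Nat.mod_lt _ hD⟩ b
            * (h (b - c) * gfdm K M hK hM g c j))
        (fun s => by simp [Equiv.coe_addLeft, add_sub_cancel_left])]
      calc (∑ s : Fin (K*M), dftMat (K*M) (⟨(i.val + l) % (K*M), Nat.mod_lt _ hD⟩ : Fin (K*M)) (c + s)
              * (h s * gfdm K M hK hM g c j))
          = ∑ s : Fin (K*M), (cc (K*M) ((((i.val + l) % (K*M) : ℕ) : ℤ) * (s.val:ℤ)) * h s)
              * (cc (K*M) ((((i.val + l) % (K*M) : ℕ) : ℤ) * (c.val:ℤ))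
                  * gfdm K M hK hM g c j) / ((Real.sqrt (K*M) : ℝ) : ℂ) := by
            refine Finset.sum_congr rfl fun s _ => ?_
            rw [dftMat_apply_cc, hccsplit]
            rw [show (((K * M : ℕ)) : ℝ) = (K : ℝ) * (M : ℝ) from by push_cast; ring]
            ring
        _ = _ := by rw [← Finset.sum_div, ← Finset.sum_mul]
    have hA : ∀ c : Fin (K*M), gfdm K M hK hM g c j
        = g ⟨(c.val + K*M - (j.val / K) * K) % (K*M), Nat.mod_lt _ (Nat.mul_pos hK hM)⟩
          * cc (K*M) (-(((j.val % K : ℕ) : ℤ) * (M:ℤ) * (c.val:ℤ))) := by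
      intro c
      unfold gfdm
      rw [Matrix.of_apply]
      congr 1
      unfold cc
      congr 1
      have hKc : (K:ℂ) ≠ 0 := Nat.cast_ne_zero.mpr hK.ne'
      have hMc : (M:ℂ) ≠ 0 := Nat.cast_ne_zero.mpr hM.ne'
      generalize (j.val % K : ℕ) = n
      push_cast
      field_simp
    have hidx : ∀ s : Fin (K*M),
        ((((j.val/K)*K + s.val) % (K*M)) + K*M - (j.val/K)*K) % (K*M) = s.val := by
      intro s
      have h1 : (((j.val/K)*K + s.val) % (K*M)) + K*M - (j.val/K)*K
          = (((j.val/K)*K + s.val) % (K*M)) + (K*M - (j.val/K)*K) := by omega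
      rw [h1, Nat.mod_add_mod]
      have h2 : (j.val/K)*K + s.val + (K*M - (j.val/K)*K) = s.val + K*M := by omega
      rw [h2, Nat.add_mod_right, Nat.mod_eq_of_lt s.isLt]
    have hccw : ∀ s : Fin (K*M), cc (K*M) (u * ((((j.val/K)*K + s.val) % (K*M) : ℕ) : ℤ))
        = cc (K*M) (u * ((((j.val/K)*K : ℕ)) : ℤ)) * cc (K*M) (u * (s.val:ℤ)) := by
      intro s
      rw [← cc_add]
      apply cc_congr (K*M) hD
      rw [Int.natCast_mod]
      rw [Int.mul_emod, Int.emod_emod_of_dvd _ dvd_rfl, ← Int.mul_emod]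
      congr 1
      push_cast
      ring
    have ht0lt : (((i.val + l) % (K*M)) + (K*M - (j.val % K) * M)) % (K*M) < K*M :=
      Nat.mod_lt _ hD
    have hnat : (((((i.val + l) % (K*M)) + (K*M - (j.val % K) * M)) : ℕ) : ℤ)
        = u + ((K*M : ℕ) : ℤ) := by
      rw [hu]
      push_cast [Nat.cast_sub hkMle]
      ring
    have hu0 : u % ((K*M : ℕ) : ℤ)
        = ((((((i.val + l) % (K*M)) + (K*M - (j.val % K) * M)) % (K*M) : ℕ)) : ℤ)
            % ((K*M : ℕ) : ℤ) := by
      rw [Int.natCast_mod, Int.emod_emod_of_dvd _ dvd_rfl, hnat, int_mod_add_self]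
    have hidx2 : (((((i.val + l) % (K*M)) + (K*M - (j.val % K) * M)) % (K*M)) + (K*M - l)) % (K*M)
        = (i.val + (K*M - (j.val % K) * M)) % (K*M) := by
      rw [Nat.mod_add_mod]
      have h2 : (i.val + l) % (K*M) + (K*M - (j.val % K) * M) + (K*M - l)
          = (i.val + l) % (K*M) + ((K*M - (j.val % K) * M) + (K*M - l)) := by omega
      rw [h2, Nat.mod_add_mod]
      have h3 : i.val + l + ((K*M - (j.val % K) * M) + (K*M - l))
          = i.val + (K*M - (j.val % K) * M) + K*M := by omega
      rw [h3, Nat.add_mod_right]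
    have hsum2 : (∑ c : Fin (K*M), cc (K*M) ((((i.val + l) % (K*M) : ℕ) : ℤ) * (c.val:ℤ))
          * gfdm K M hK hM g c j)
        = cc (K*M) (u * ((((j.val/K)*K : ℕ)) : ℤ))
          * pad (K*M) M g1 ⟨(i.val + (K*M - (j.val % K) * M)) % (K*M), hr0lt⟩ := by
      calc (∑ c : Fin (K*M), cc (K*M) ((((i.val + l) % (K*M) : ℕ) : ℤ) * (c.val:ℤ))
            * gfdm K M hK hM g c j)
          = ∑ c : Fin (K*M),
              g ⟨(c.val + K*M - (j.val / K) * K) % (K*M), Nat.mod_lt _ (Nat.mul_pos hK hM)⟩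
                * cc (K*M) (u * (c.val:ℤ)) := by
            refine Finset.sum_congr rfl fun c _ => ?_
            rw [hA c, show u * (c.val:ℤ)
                = (((i.val + l) % (K*M) : ℕ) : ℤ) * (c.val:ℤ)
                  + (-(((j.val % K : ℕ) : ℤ) * (M:ℤ) * (c.val:ℤ))) from by rw [hu]; ring,
              cc_add]
            ring
        _ = ∑ s : Fin (K*M),
              g s * (cc (K*M) (u * ((((j.val/K)*K : ℕ)) : ℤ)) * cc (K*M) (u * (s.val:ℤ))) := by
            rw [← Fintype.sum_equiv (Equiv.addLeft (⟨(j.val/K)*K, hmKlt⟩ : Fin (K*M)))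
              (fun s : Fin (K*M) => g s
                * (cc (K*M) (u * ((((j.val/K)*K : ℕ)) : ℤ)) * cc (K*M) (u * (s.val:ℤ))))
              (fun c : Fin (K*M) =>
                g ⟨(c.val + K*M - (j.val / K) * K) % (K*M), Nat.mod_lt _ (Nat.mul_pos hK hM)⟩
                  * cc (K*M) (u * (c.val:ℤ)))
              (fun s => ?_)]
            simp only [Equiv.coe_addLeft]
            have hval : ((⟨(j.val/K)*K, hmKlt⟩ : Fin (K*M)) + s).val
                = ((j.val/K)*K + s.val) % (K*M) := by rw [Fin.val_add]
            congr 1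
            · apply congrArg g
              apply Fin.ext
              symm
              show (((⟨(j.val/K)*K, hmKlt⟩ : Fin (K*M)) + s).val + K*M - (j.val / K) * K) % (K*M)
                = s.val
              rw [hval]
              exact hidx s
            · rw [show (((((⟨(j.val/K)*K, hmKlt⟩ : Fin (K*M)) + s)).val : ℕ) : ℤ)
                  = ((((j.val/K)*K + s.val) % (K*M) : ℕ) : ℤ) from by rw [hval]]
              exact (hccw s).symm
        _ = cc (K*M) (u * ((((j.val/K)*K : ℕ)) : ℤ)) * ∑ s : Fin (K*M), cc (K*M) (u * (s.val:ℤ)) * g s := by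
            rw [Finset.mul_sum]
            refine Finset.sum_congr rfl fun s _ => by ring
        _ = cc (K*M) (u * ((((j.val/K)*K : ℕ)) : ℤ))
            * pad (K*M) M g1 ⟨(i.val + (K*M - (j.val % K) * M)) % (K*M), hr0lt⟩ := by
            congr 1
            have hmid : (∑ s : Fin (K*M), cc (K*M) (u * (s.val:ℤ)) * g s)
                = ∑ s : Fin (K*M), cc (K*M)
                    (((⟨(((i.val + l) % (K*M)) + (K*M - (j.val % K) * M)) % (K*M), ht0lt⟩
                      : Fin (K*M)).val : ℤ) * (s.val:ℤ)) * g s := by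
              refine Finset.sum_congr rfl fun s _ => ?_
              congr 1
              apply cc_congr (K*M) hD
              rw [Int.mul_emod, hu0, ← Int.mul_emod]
            rw [hmid, hgf']
            apply congrArg
            apply Fin.ext
            exact hidx2
    calc (∑ c : Fin (K*M), ∑ b : Fin (K*M),
            dftMat (K*M) (⟨(i.val + l) % (K*M), Nat.mod_lt _ hD⟩ : Fin (K*M)) b
              * (h (b - c) * gfdm K M hK hM g c j))
        = ∑ c : Fin (K*M),
            (∑ s : Fin (K*M), cc (K*M) (((((i.val + l) % (K*M) : ℕ)) : ℤ) * (s.val:ℤ)) * h s)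
              * (cc (K*M) (((((i.val + l) % (K*M) : ℕ)) : ℤ) * (c.val : ℤ))
                  * gfdm K M hK hM g c j) / ((Real.sqrt (K*M) : ℝ) : ℂ) :=
          Finset.sum_congr rfl fun c _ => hstep c
      _ = (∑ s : Fin (K*M), cc (K*M) (((((i.val + l) % (K*M) : ℕ)) : ℤ) * (s.val:ℤ)) * h s)
            * (∑ c : Fin (K*M), cc (K*M) (((((i.val + l) % (K*M) : ℕ)) : ℤ) * (c.val : ℤ))
                * gfdm K M hK hM g c j) / ((Real.sqrt (K*M) : ℝ) : ℂ) := by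
          rw [← Finset.sum_div, ← Finset.mul_sum]
      _ = _ := by
          rw [hsum2]
          rw [show cc (K*M) (u * ((((j.val/K)*K : ℕ)) : ℤ))
              = cc (K*M) (u * (((j.val / K : ℕ) : ℤ) * (K : ℤ))) from by norm_cast]
          ring
  · -- X = RHS
    have hq0lt : (j.val % K) * M + j.val / K < K * M := by
      have h1 : (j.val % K + 1) * M ≤ K * M := Nat.mul_le_mul_right M hkK
      have h2 : (j.val % K + 1) * M = (j.val % K) * M + M := by ring
      omega
    have hpi : ∀ q : Fin (K*M), piAB K M q j
        = if q = (⟨(j.val % K) * M + j.val / K, hq0lt⟩ : Fin (K*M)) then 1 else 0 := by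
      intro q
      unfold piAB
      rw [Matrix.of_apply]
      congr 1
      rw [eq_iff_iff]
      constructor
      · rintro ⟨h1, h2⟩
        apply Fin.ext
        have h3 := Nat.div_add_mod q.val M
        rw [h1, h2] at h3
        have h4 : M * (j.val % K) = (j.val % K) * M := Nat.mul_comm _ _
        show q.val = (j.val % K) * M + j.val / K
        omega
      · rintro rfl
        refine ⟨?_, ?_⟩
        · show ((j.val % K) * M + j.val / K) / M = j.val % K
          rw [Nat.mul_comm (j.val % K) M, Nat.mul_add_div hM, Nat.div_eq_of_lt hmM, add_zero]
        · show ((j.val % K) * M + j.val / K) % M = j.val / K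
          rw [Nat.mul_comm (j.val % K) M, Nat.mul_add_mod, Nat.mod_eq_of_lt hmM]
    rw [Matrix.mul_apply]
    simp_rw [hpi]
    rw [sum_mul_ite_one]
    have hq0d : (⟨(j.val % K) * M + j.val / K, hq0lt⟩ : Fin (K*M)).divNat
        = (⟨j.val % K, hkK⟩ : Fin K) := by
      apply Fin.ext
      rw [Fin.coe_divNat]
      show ((j.val % K) * M + j.val / K) / M = j.val % K
      rw [Nat.mul_comm (j.val % K) M, Nat.mul_add_div hM, Nat.div_eq_of_lt hmM, add_zero]
    have hq0m : (⟨(j.val % K) * M + j.val / K, hq0lt⟩ : Fin (K*M)).modNat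
        = (⟨j.val / K, hmM⟩ : Fin M) := by
      apply Fin.ext
      rw [Fin.coe_modNat]
      show ((j.val % K) * M + j.val / K) % M = j.val / K
      rw [Nat.mul_comm (j.val % K) M, Nat.mul_add_mod, Nat.mod_eq_of_lt hmM]
    unfold blkdiag
    rw [Matrix.of_apply, hq0d, hq0m]
    by_cases hik : i.val / M = j.val % K
    · -- diagonal block case
      have hid : (i.divNat : Fin K) = (⟨j.val % K, hkK⟩ : Fin K) := by
        apply Fin.ext; rw [Fin.coe_divNat]; exact hik
      rw [hid, if_pos rfl]
      simp only [Matrix.smul_apply, smul_eq_mul]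
      rw [Matrix.mul_assoc, Matrix.mul_assoc, Matrix.diagonal_mul,
        Matrix.diagonal_mul, cycPow_neg_mul_apply M hM l, dftMat_apply_cc M]
      have hisplit : (j.val % K) * M + i.val % M = i.val := by
        have h5 := Nat.div_add_mod i.val M
        rw [hik] at h5
        have h6 : M * (j.val % K) = (j.val % K) * M := Nat.mul_comm _ _
        omega
      -- seg term
      have hseg : seg ((cycPow (K*M) (-(l:ℤ))).mulVec
            (((Real.sqrt (K*M) : ℝ) : ℂ) • (dftMat (K*M)).mulVec h)) ⟨j.val % K, hkK⟩ i.modNat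
          = ∑ s : Fin (K*M), cc (K*M) (((((i.val + l) % (K*M) : ℕ)) : ℤ) * (s.val : ℤ)) * h s := by
        unfold seg
        rw [cycPow_neg_mulVec (K*M) hD l, Pi.smul_apply, smul_eq_mul, hvec h]
        refine Finset.sum_congr rfl fun s _ => ?_
        congr 2
        simp only [Fin.coe_modNat]
        rw [hisplit]
      rw [hseg]
      -- pad term
      have hr0v : (i.val + (K*M - (j.val % K) * M)) % (K*M) = i.val % M :=
        (index_lemma K M i.val (j.val % K) hM i.isLt hkK).1 hik
      have hpad : pad (K*M) M g1 ⟨(i.val + (K*M - (j.val % K) * M)) % (K*M), hr0lt⟩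
          = g1 i.modNat := by
        simp only [pad]
        have h5 : (i.val + (K*M - (j.val % K) * M)) % (K*M) < M := by
          rw [hr0v]; exact Nat.mod_lt _ hM
        rw [dif_pos h5]
        apply congrArg g1
        apply Fin.ext
        simp only [Fin.coe_modNat]
        exact hr0v
      rw [hpad]
      -- cc term
      have hccM : cc M (((((i.modNat.val + l) % M : ℕ)) : ℤ)
            * (((⟨j.val / K, hmM⟩ : Fin M)).val : ℤ))
          = cc (K*M) ((((((i.val + l) % (K*M) : ℕ)) : ℤ) - ((j.val % K : ℕ) : ℤ) * (M : ℤ))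
              * (((j.val / K : ℕ) : ℤ) * (K : ℤ))) := by
        rw [cc_scale K M hK hM]
        have e1 : cc (K*M) ((((i.modNat.val + l) % M : ℕ) : ℤ)
              * (((⟨j.val / K, hmM⟩ : Fin M)).val : ℤ) * (K:ℤ))
            = cc (K*M) (((i.val % M : ℕ) + (l:ℤ)) * ((j.val / K : ℕ) : ℤ) * (K:ℤ)) := by
          apply cc_mod_mul K M hK hM _ _ _ ?_
          rw [Int.natCast_mod, Int.emod_emod_of_dvd _ dvd_rfl]
          push_cast [Fin.coe_modNat]
          ring_nf
        rw [show (((⟨j.val / K, hmM⟩ : Fin M)).val : ℤ) = ((j.val / K : ℕ) : ℤ) from rfl] at e1 ⊢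
        rw [e1]
        have e2 : cc (K*M) ((((((i.val + l) % (K*M) : ℕ)) : ℤ) - ((j.val % K : ℕ) : ℤ) * (M : ℤ))
              * (((j.val / K : ℕ) : ℤ) * (K : ℤ)))
            = cc (K*M) (((((i.val + l) % (K*M) : ℕ) : ℤ) - ((j.val % K : ℕ) : ℤ) * (M : ℤ))
              * ((j.val / K : ℕ) : ℤ) * (K : ℤ)) := by
          congr 1; ring
        rw [e2]
        apply cc_mod_mul K M hK hM _ _ _ ?_
        -- ((i%M) + l) % M = ((i+l)%(K*M) - (j%K)*M) % M
        have b1 : ((((i.val + l) % (K*M) : ℕ)) : ℤ) % (M:ℤ) = ((i.val + l : ℕ) : ℤ) % (M:ℤ) := by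
          rw [Int.natCast_mod]
          exact Int.emod_emod_of_dvd _ ⟨(K:ℤ), by push_cast; ring⟩
        have b2 : (((((i.val + l) % (K*M) : ℕ)) : ℤ) - ((j.val % K : ℕ) : ℤ) * (M : ℤ)) % (M:ℤ)
            = ((i.val + l : ℕ) : ℤ) % (M:ℤ) := by
          rw [Int.sub_emod, b1, ← Int.sub_emod]
          rw [show ((i.val + l : ℕ) : ℤ) - ((j.val % K : ℕ) : ℤ) * (M : ℤ)
              = (((i.val + l : ℕ) : ℤ)) + (M:ℤ) * (-((j.val % K : ℕ) : ℤ)) by ring]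
          rw [show ((i.val + l : ℕ) : ℤ) + (M:ℤ) * (-((j.val % K : ℕ) : ℤ))
              = ((i.val + l : ℕ) : ℤ) + (-((j.val % K : ℕ) : ℤ)) * (M:ℤ) by ring]
          rw [Int.add_mul_emod_self_right]
        rw [b2]
        -- (i%M + l) % M = (i + l) % M
        have h5' : (M:ℤ) * ((i.val / M : ℕ) : ℤ) + ((i.val % M : ℕ) : ℤ) = (i.val : ℤ) := by
          exact_mod_cast Nat.div_add_mod i.val M
        have b3 : ((i.val % M : ℕ) : ℤ) + (l:ℤ) = ((i.val : ℕ) : ℤ) + (l:ℤ)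
            + (M:ℤ) * (-((i.val / M : ℕ) : ℤ)) := by linear_combination h5'
        rw [b3]
        rw [show ((i.val : ℕ) : ℤ) + (l:ℤ) + (M:ℤ) * (-((i.val / M : ℕ) : ℤ))
            = ((i.val : ℕ) : ℤ) + (l:ℤ) + (-((i.val / M : ℕ) : ℤ)) * (M:ℤ) by ring]
        rw [Int.add_mul_emod_self_right]
        push_cast
        ring_nf
      rw [← hccM]
      -- final algebra
      have hmn : g1 i.modNat = g1 i.modNat := rfl
      rw [hsplit]
      field_simp
    · -- off-diagonal: both sides zero
      have hne : (i.divNat : Fin K) ≠ (⟨j.val % K, hkK⟩ : Fin K) := by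
        intro hc
        apply hik
        have := congrArg Fin.val hc
        rwa [Fin.coe_divNat] at this
      rw [if_neg hne]
      have hpad : pad (K*M) M g1 ⟨(i.val + (K*M - (j.val % K) * M)) % (K*M), hr0lt⟩ = 0 := by
        simp only [pad]
        rw [dif_neg]
        exact not_lt.mpr ((index_lemma K M i.val (j.val % K) hM i.isLt hkK).2 hik)
      rw [hpad]
      simp
end
end

section
/- Theorem 1 (FD decoupling, existential form): Let K, M, T, R be positive integers, D = KM, and let g ∈ ℂ^D be a GFDM prototype filter whose frequency-domain version g_f = √D · W_D · g satisfies g_f = Π_D^l · [g_1^T, 0^T_{(K−1)M}]^T for some g_1 ∈ ℂ^M and integer 0 ≤ l < D. Let A be the GFDM transmitter matrix of g, let H_{r,t} ∈ ℂ^{D×D} be circulant matrices, and let H̃ ∈ ℂ^{RD×TD} be the block matrix with (r,t) block H_{r,t}·A. Then there exist matrices F_k ∈ ℂ^{MR×MT}, k = 0, …, K−1, such that H̃ = U^H · blkdiag({F_k}_{k=0}^{K−1}) · P, where U = (Π_{KR} ⊗ I_M)(I_R ⊗ Π_D^{−l} W_D) and P = (Π_{KT} ⊗ I_M)(I_T ⊗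 Π_{KM}). -/
open Matrix Complex

noncomputable section

open Matrix Complex

noncomputable section

def eD (D : ℕ) (z : ℤ) : ℂ := Complex.exp (2 * (Real.pi : ℂ) * Complex.I * (z : ℂ) / (D : ℂ))

lemma eD_add (D : ℕ) (x y : ℤ) : eD D (x + y) = eD D x * eD D y := by
  rw [eD, eD, eD, ← Complex.exp_add]; congr 1; push_cast; ring

lemma eD_zero (D : ℕ) : eD D 0 = 1 := by simp [eD]

lemma eD_mul_D (D : ℕ) (hD : 0 < D) (t : ℤ) : eD D ((D : ℤ) * t) = 1 := by
  rw [eD]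
  rw [show 2 * (Real.pi : ℂ) * Complex.I * (((D : ℤ) * t : ℤ) : ℂ) / (D : ℂ)
      = (t : ℂ) * (2 * (Real.pi : ℂ) * Complex.I) by
    have : (D : ℂ) ≠ 0 := by exact_mod_cast hD.ne'
    push_cast
    field_simp]
  exact Complex.exp_int_mul_two_pi_mul_I t

lemma eD_congr (D : ℕ) (hD : 0 < D) {x y : ℤ} (h : (D : ℤ) ∣ x - y) : eD D x = eD D y := by
  obtain ⟨t, ht⟩ := h
  have : x = y + (D : ℤ) * t := by linarith
  rw [this, eD_add, eD_mul_D D hD, mul_one]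

lemma conj_eD (D : ℕ) (x : ℤ) : (starRingEnd ℂ) (eD D x) = eD D (-x) := by
  rw [eD, eD, ← Complex.exp_conj]; congr 1
  simp only [map_div₀, _root_.map_mul, Complex.conj_I, Complex.conj_ofReal, map_ofNat,
    map_intCast, map_natCast]
  push_cast
  ring

lemma eD_nat_pow (D : ℕ) (n : ℕ) (x : ℤ) : eD D ((n : ℤ) * x) = eD D x ^ n := by
  rw [eD, eD, ← Complex.exp_nat_mul]; congr 1; push_cast; ring

lemma dftMat_apply_eD (D : ℕ) (f n : Fin D) :
    dftMat D f n = eD D (-(f.val * n.val : ℤ)) / ((Real.sqrt D : ℝ) : ℂ) := by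
  rw [dftMat, eD]
  simp only [Matrix.of_apply]
  congr 2
  push_cast; ring

lemma sum_ite_val {N : ℕ} (f : Fin N → ℂ) (c : ℕ) (hc : c < N) :
    (∑ a : Fin N, if a.val = c then f a else 0) = f ⟨c, hc⟩ := by
  rw [Finset.sum_eq_single (⟨c, hc⟩ : Fin N)]
  · simp
  · intro b _ hb
    rw [if_neg]
    intro hbc
    exact hb (Fin.ext hbc)
  · intro habs; exact absurd (Finset.mem_univ _) habs

lemma mod_eq_of_dvd {a b D : ℕ} (hb : b < D) (h : (D : ℤ) ∣ (a : ℤ) - (b : ℤ)) : a % D = b := by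
  have h1 : (a : ℤ) % D = (b : ℤ) % D := by
    obtain ⟨t, ht⟩ := h
    have ha : (a : ℤ) = b + D * t := by linarith
    rw [ha, Int.add_mul_emod_self_left]
  have h2 : (b : ℤ) % D = b := Int.emod_eq_of_lt (by positivity) (by exact_mod_cast hb)
  have h3 : ((a % D : ℕ) : ℤ) = (a : ℤ) % (D : ℤ) := by push_cast; ring
  have : ((a % D : ℕ) : ℤ) = (b : ℤ) := by rw [h3, h1, h2]
  exact_mod_cast this

lemma dft_unitary (p : ℕ) (hp : 0 < p) : (dftMat p)ᴴ * dftMat p = 1 := by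
  ext i j
  rw [Matrix.mul_apply, Matrix.one_apply]
  have hsqrt : ((Real.sqrt p : ℝ) : ℂ) * ((Real.sqrt p : ℝ) : ℂ) = (p : ℂ) := by
    rw [← Complex.ofReal_mul, Real.mul_self_sqrt (by positivity)]
    norm_num
  have step : ∀ n : Fin p, (dftMat p)ᴴ i n * dftMat p n j
      = eD p ((i.val : ℤ) - j.val) ^ n.val / (p : ℂ) := by
    intro n
    rw [Matrix.conjTranspose_apply, dftMat_apply_eD, dftMat_apply_eD, ← eD_nat_pow]
    simp only [star_div₀, Complex.star_def, conj_eD, Complex.conj_ofReal]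
    rw [div_mul_div_comm, ← eD_add, hsqrt]
    congr 2
    push_cast; ring
  rw [Finset.sum_congr rfl (fun n _ => step n)]
  rw [← Finset.sum_div]
  by_cases hij : i = j
  · subst hij
    rw [if_pos rfl, sub_self, eD_zero]
    simp only [one_pow, Finset.sum_const, Finset.card_univ, Fintype.card_fin,
      nsmul_eq_mul, mul_one]
    rw [div_eq_one_iff_eq (by exact_mod_cast hp.ne')]
  · rw [if_neg hij]
    have hzeta : eD p ((i.val : ℤ) - j.val) ≠ 1 := by
      intro habs
      rw [eD, Complex.exp_eq_one_iff] at habs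
      obtain ⟨n, hn⟩ := habs
      have hpne : (p : ℂ) ≠ 0 := by exact_mod_cast hp.ne'
      have h2 : (((i.val : ℤ) - j.val : ℤ) : ℂ) = (n : ℂ) * (p : ℂ) := by
        field_simp at hn
        have hI : (2 : ℂ) * (Real.pi : ℂ) * Complex.I ≠ 0 := by
          simp [Real.pi_ne_zero, Complex.I_ne_zero]
        apply mul_left_cancel₀ hI
        push_cast at hn ⊢
        linear_combination (2 * (Real.pi : ℂ) * Complex.I) * hn
      have h3 : (i.val : ℤ) - j.val = n * p := by exact_mod_cast h2
      have hji : i.val ≠ j.val := fun hv => hij (Fin.ext hv)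
      have hb1 : (i.val : ℤ) - j.val ≠ 0 := by intro hz; exact hji (by omega)
      have hb2 : (i.val : ℤ) - j.val < p := by have := i.isLt; omega
      have hb3 : -(p : ℤ) < (i.val : ℤ) - j.val := by have := j.isLt; omega
      rcases lt_trichotomy n 0 with hn0 | hn0 | hn0
      · have hle : n * (p : ℤ) ≤ -1 * p :=
          mul_le_mul_of_nonneg_right (by omega) (by positivity)
        linarith
      · rw [hn0, zero_mul] at h3; exact hb1 h3
      · have hle : 1 * (p : ℤ) ≤ n * p :=
          mul_le_mul_of_nonneg_right (by omega) (by positivity)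
        linarith
    have hpow : eD p ((i.val : ℤ) - j.val) ^ p = 1 := by
      rw [← eD_nat_pow, show (1 : ℂ) = eD p 0 from (eD_zero p).symm]
      exact eD_congr p hp ⟨(i.val : ℤ) - j.val, by push_cast; ring⟩
    rw [Fin.sum_univ_eq_sum_range, geom_sum_eq hzeta, hpow]
    simp

lemma divmod_of_eq {n x y B : ℕ} (hB : 0 < B) (hy : y < B) (hn : n = x * B + y) :
    n / B = x ∧ n % B = y := by
  subst hn
  constructor
  · rw [mul_comm, Nat.mul_add_div hB, Nat.div_eq_of_lt hy, add_zero]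
  · rw [mul_comm, Nat.mul_add_mod, Nat.mod_eq_of_lt hy]

lemma val_eq_of_divmod {n m B : ℕ} (h1 : n / B = m / B) (h2 : n % B = m % B) : n = m := by
  calc n = B * (n / B) + n % B := (Nat.div_add_mod _ _).symm
    _ = B * (m / B) + m % B := by rw [h1, h2]
    _ = m := Nat.div_add_mod _ _

lemma val_cond {A : ℕ} [NeZero A] (a : Fin A) (z : ZMod A) :
    (a.val : ZMod A) = z ↔ a.val = z.val := by
  constructor
  · intro h; rw [← h, ZMod.val_natCast, Nat.mod_eq_of_lt a.isLt]
  · intro h; rw [h, ZMod.natCast_val, ZMod.cast_id]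

lemma cyc_unitary (A : ℕ) (hA : 0 < A) (s : ℤ) : (cycPow A s)ᴴ * cycPow A s = 1 := by
  haveI : NeZero A := ⟨hA.ne'⟩
  ext i j
  rw [Matrix.mul_apply, Matrix.one_apply]
  have step : ∀ a : Fin A, (cycPow A s)ᴴ i a * cycPow A s a j
      = if a.val = (((i.val : ZMod A) + s).val) then
          (if i = j then 1 else 0) else 0 := by
    intro a
    simp only [Matrix.conjTranspose_apply, cycPow, Matrix.of_apply]
    by_cases h1 : (a.val : ZMod A) = (i.val : ZMod A) + s
    · have hval : a.val = ((i.val : ZMod A) + s).val := (val_cond a _).mp h1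
      rw [if_pos h1, if_pos hval]
      by_cases h2 : (a.val : ZMod A) = (j.val : ZMod A) + s
      · rw [if_pos h2, if_pos (by
          apply Fin.ext
          have h3 : (i.val : ZMod A) = (j.val : ZMod A) := add_right_cancel (h1.symm.trans h2)
          have h4 : ((i.val : ZMod A)).val = ((j.val : ZMod A)).val := by rw [h3]
          rwa [ZMod.val_natCast, ZMod.val_natCast, Nat.mod_eq_of_lt i.isLt,
            Nat.mod_eq_of_lt j.isLt] at h4)]
        simp
      · rw [if_neg h2, if_neg (by rintro rfl; exact h2 h1)]
        simp
    · rw [if_neg h1, if_neg (fun hval => h1 ((val_cond a _).mpr hval))]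
      simp
  rw [Finset.sum_congr rfl (fun a _ => step a), sum_ite_val _ _ (ZMod.val_lt _)]

lemma piAB_unitary (A B : ℕ) (hA : 0 < A) (hB : 0 < B) : (piAB A B)ᴴ * piAB A B = 1 := by
  ext i j
  rw [Matrix.mul_apply, Matrix.one_apply]
  have hiA : i.val % A < A := Nat.mod_lt _ hA
  have hidiv : i.val / A < B := Nat.div_lt_of_lt_mul (by have := i.isLt; omega)
  have hc : (i.val % A) * B + i.val / A < A * B := by
    calc (i.val % A) * B + i.val / A < (i.val % A) * B + B := by omega
      _ = (i.val % A + 1) * B := by ring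
      _ ≤ A * B := Nat.mul_le_mul_right B hiA
  have step : ∀ a : Fin (A * B), (piAB A B)ᴴ i a * piAB A B a j
      = if a.val = (i.val % A) * B + i.val / A then (if i = j then 1 else 0) else 0 := by
    intro a
    simp only [Matrix.conjTranspose_apply, piAB, Matrix.of_apply]
    by_cases h1 : a.val / B = i.val % A ∧ a.val % B = i.val / A
    · have hval : a.val = (i.val % A) * B + i.val / A := by
        have h0 : B * (a.val / B) + a.val % B = a.val := Nat.div_add_mod _ _
        rw [h1.1, h1.2] at h0
        rw [← h0]; ring
      rw [if_pos h1, if_pos hval]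
      by_cases h2 : a.val / B = j.val % A ∧ a.val % B = j.val / A
      · rw [if_pos h2, if_pos (by
          apply Fin.ext
          apply val_eq_of_divmod (B := A)
          · omega
          · omega)]
        simp
      · rw [if_neg h2, if_neg (by rintro rfl; exact h2 h1)]
        simp
    · rw [if_neg h1, if_neg (fun hval => h1 (divmod_of_eq hB hidiv hval))]
      simp
  rw [Finset.sum_congr rfl (fun a _ => step a), sum_ite_val _ _ hc]

lemma fin_eq_divNat_modNat {a c : ℕ} {i j : Fin (a * c)} :
    i = j ↔ (i.divNat = j.divNat ∧ i.modNat = j.modNat) := by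
  constructor
  · rintro rfl; exact ⟨rfl, rfl⟩
  · rintro ⟨h1, h2⟩
    apply Fin.ext
    have h1' : i.val / c = j.val / c := by
      have := congrArg Fin.val h1
      rwa [Fin.coe_divNat, Fin.coe_divNat] at this
    have h2' : i.val % c = j.val % c := by
      have := congrArg Fin.val h2
      rwa [Fin.coe_modNat, Fin.coe_modNat] at this
    exact val_eq_of_divmod h1' h2'

lemma sum_fin_mul {b d : ℕ} (F : Fin (b * d) → ℂ) :
    ∑ a : Fin (b * d), F a = ∑ x : Fin b, ∑ y : Fin d, F (finProdFinEquiv (x, y)) := by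
  rw [← Equiv.sum_comp finProdFinEquiv F, Fintype.sum_prod_type]

lemma divNat_finProd {b d : ℕ} (x : Fin b) (y : Fin d) :
    (finProdFinEquiv (x, y)).divNat = x := by
  have := finProdFinEquiv_symm_apply (finProdFinEquiv (x, y))
  rw [Equiv.symm_apply_apply] at this
  exact (congrArg Prod.fst this).symm

lemma modNat_finProd {b d : ℕ} (x : Fin b) (y : Fin d) :
    (finProdFinEquiv (x, y)).modNat = y := by
  have := finProdFinEquiv_symm_apply (finProdFinEquiv (x, y))
  rw [Equiv.symm_apply_apply] at this
  exact (congrArg Prod.snd this).symm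

lemma kron_mul {a b c d e f : ℕ} (X : Matrix (Fin a) (Fin b) ℂ) (Y : Matrix (Fin c) (Fin d) ℂ)
    (Z : Matrix (Fin b) (Fin e) ℂ) (W : Matrix (Fin d) (Fin f) ℂ) :
    kron X Y * kron Z W = kron (X * Z) (Y * W) := by
  ext i j
  rw [Matrix.mul_apply]
  simp only [kron, Matrix.of_apply]
  rw [sum_fin_mul (fun u => X i.divNat u.divNat * Y i.modNat u.modNat *
      (Z u.divNat j.divNat * W u.modNat j.modNat))]
  simp only [divNat_finProd, modNat_finProd]
  rw [Matrix.mul_apply, Matrix.mul_apply, Finset.sum_mul_sum]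
  apply Finset.sum_congr rfl; intro x _
  apply Finset.sum_congr rfl; intro y _
  ring

lemma kron_conjT {a b c d : ℕ} (X : Matrix (Fin a) (Fin b) ℂ) (Y : Matrix (Fin c) (Fin d) ℂ) :
    (kron X Y)ᴴ = kron Xᴴ Yᴴ := by
  ext i j
  simp only [Matrix.conjTranspose_apply, kron, Matrix.of_apply, star_mul']

lemma kron_one_one {a c : ℕ} :
    kron (1 : Matrix (Fin a) (Fin a) ℂ) (1 : Matrix (Fin c) (Fin c) ℂ) = 1 := by
  ext i j
  simp only [kron, Matrix.of_apply, Matrix.one_apply]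
  by_cases h : i = j
  · rw [fin_eq_divNat_modNat] at h
    rw [if_pos h.1, if_pos h.2, if_pos (fin_eq_divNat_modNat.mpr h), mul_one]
  · rw [if_neg h]
    by_cases h1 : i.divNat = j.divNat
    · rw [if_pos h1, if_neg (fun h2 => h (fin_eq_divNat_modNat.mpr ⟨h1, h2⟩)), mul_zero]
    · rw [if_neg h1, zero_mul]

lemma castM_conjT {a b c d : ℕ} (h1 : a = c) (h2 : b = d) (X : Matrix (Fin a) (Fin b) ℂ) :
    (castM h1 h2 X)ᴴ = castM h2 h1 Xᴴ := by
  subst h1; subst h2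
  rfl

lemma castM_mul {a b c a' b' c' : ℕ} (h1 : a = a') (h2 : b = b') (h3 : c = c')
    (X : Matrix (Fin a) (Fin b) ℂ) (Y : Matrix (Fin b) (Fin c) ℂ) :
    castM h1 h2 X * castM h2 h3 Y = castM h1 h3 (X * Y) := by
  subst h1; subst h2; subst h3
  rfl

lemma castM_one {a a' : ℕ} (h : a = a') : castM h h (1 : Matrix (Fin a) (Fin a) ℂ) = 1 := by
  subst h; rfl

lemma castM_apply {a b c d : ℕ} (h1 : a = c) (h2 : b = d) (X : Matrix (Fin a) (Fin b) ℂ)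
    (i : Fin c) (j : Fin d) :
    castM h1 h2 X i j = X ⟨i.val, by omega⟩ ⟨j.val, by omega⟩ := by
  subst h1; subst h2; rfl

lemma mul_perm_collapse_left {N n : ℕ} (Q : Matrix (Fin N) (Fin N) ℂ)
    (X : Matrix (Fin N) (Fin n) ℂ) (i : Fin N) (c : ℕ) (hc : c < N)
    (hQ : ∀ a : Fin N, Q i a = if a.val = c then 1 else 0) (j : Fin n) :
    (Q * X) i j = X ⟨c, hc⟩ j := by
  rw [Matrix.mul_apply,
    Finset.sum_congr rfl (fun a _ => by rw [hQ a, ite_mul, one_mul, zero_mul])]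
  exact sum_ite_val _ c hc

lemma mul_perm_collapse_right {n N : ℕ} (X : Matrix (Fin n) (Fin N) ℂ)
    (Q : Matrix (Fin N) (Fin N) ℂ) (j : Fin N) (c : ℕ) (hc : c < N)
    (hQ : ∀ b : Fin N, Q j b = if b.val = c then 1 else 0) (i : Fin n) :
    (X * Qᴴ) i j = X i ⟨c, hc⟩ := by
  have hterm : ∀ b : Fin N, X i b * (Qᴴ) b j = if b.val = c then X i b else 0 := by
    intro b
    rw [Matrix.conjTranspose_apply, hQ b]
    split_ifs <;> simp
  rw [Matrix.mul_apply, Finset.sum_congr rfl (fun b _ => hterm b)]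
  exact sum_ite_val _ c hc

lemma kron_one_mul_blockFlat {R T a a' b : ℕ} (G : Matrix (Fin a) (Fin a') ℂ)
    (E : Fin R → Fin T → Matrix (Fin a') (Fin b) ℂ) :
    kron (1 : Matrix (Fin R) (Fin R) ℂ) G * blockFlat E
      = blockFlat (fun r t => G * E r t) := by
  ext i j
  rw [Matrix.mul_apply]
  simp only [kron, blockFlat, Matrix.of_apply, Matrix.one_apply]
  rw [sum_fin_mul (fun u => (if i.divNat = u.divNat then (1:ℂ) else 0) * G i.modNat u.modNat *
      E u.divNat j.divNat u.modNat j.modNat)]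
  simp only [divNat_finProd, modNat_finProd, ite_mul, one_mul, zero_mul]
  rw [Finset.sum_congr rfl (fun x _ => by
    rw [show (∑ y : Fin a', if i.divNat = x then G i.modNat y * E x j.divNat y j.modNat else 0)
        = if i.divNat = x then ∑ y : Fin a', G i.modNat y * E x j.divNat y j.modNat else 0 by
      split_ifs <;> simp])]
  rw [Finset.sum_ite_eq, if_pos (Finset.mem_univ _), Matrix.mul_apply]

lemma blockFlat_mul_kron_one {R T a b b' : ℕ} (G : Matrix (Fin b) (Fin b') ℂ)
    (E : Fin R → Fin T → Matrix (Fin a) (Fin b) ℂ) :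
    blockFlat E * kron (1 : Matrix (Fin T) (Fin T) ℂ) G
      = blockFlat (fun r t => E r t * G) := by
  ext i j
  rw [Matrix.mul_apply]
  simp only [kron, blockFlat, Matrix.of_apply, Matrix.one_apply]
  rw [sum_fin_mul (fun u => E i.divNat u.divNat i.modNat u.modNat *
      ((if u.divNat = j.divNat then (1:ℂ) else 0) * G u.modNat j.modNat))]
  simp only [divNat_finProd, modNat_finProd, ite_mul, one_mul, zero_mul, mul_ite, mul_zero]
  rw [Finset.sum_congr rfl (fun x _ => by
    rw [show (∑ y : Fin b, if x = j.divNat then E i.divNat x i.modNat y * G y j.modNat else 0)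
        = if x = j.divNat then ∑ y : Fin b, E i.divNat x i.modNat y * G y j.modNat else 0 by
      split_ifs <;> simp])]
  rw [Finset.sum_ite_eq', if_pos (Finset.mem_univ _), Matrix.mul_apply]

lemma cycPow_row {D : ℕ} (hD : 0 < D) (l : ℕ) (hl : l < D) (u : Fin D) :
    ∀ a : Fin D, cycPow D (-(l : ℤ)) u a = if a.val = (u.val + l) % D then 1 else 0 := by
  haveI : NeZero D := ⟨hD.ne'⟩
  intro a
  simp only [cycPow, Matrix.of_apply]
  congr 1
  simp only [eq_iff_iff]
  have hneg : (((-(l : ℤ)) : ℤ) : ZMod D) = -(l : ZMod D) := by push_cast; ring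
  rw [hneg]
  constructor
  · intro h
    have h2 : (a.val : ZMod D) = ((u.val + l : ℕ) : ZMod D) := by
      push_cast
      rw [h]; ring
    rw [(val_cond a _).mp h2, ZMod.val_natCast]
  · intro h
    have h2 : (a.val : ZMod D) = ((u.val + l : ℕ) : ZMod D) := by
      rw [val_cond a _, ZMod.val_natCast]; exact h
    push_cast at h2
    rw [h2]; ring

def rotFin (D : ℕ) (hD : 0 < D) (p : ℕ) (hp : p < D) : Fin D ≃ Fin D where
  toFun j := ⟨(j.val + p) % D, Nat.mod_lt _ hD⟩
  invFun j := ⟨(j.val + (D - p)) % D, Nat.mod_lt _ hD⟩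
  left_inv j := by
    apply Fin.ext
    show ((j.val + p) % D + (D - p)) % D = j.val
    rw [Nat.mod_add_mod]
    have h2 : j.val + p + (D - p) = j.val + D := by omega
    rw [h2, Nat.add_mod_right, Nat.mod_eq_of_lt j.isLt]
  right_inv j := by
    apply Fin.ext
    show ((j.val + (D - p)) % D + p) % D = j.val
    rw [Nat.mod_add_mod]
    have h2 : j.val + (D - p) + p = j.val + D := by omega
    rw [h2, Nat.add_mod_right, Nat.mod_eq_of_lt j.isLt]

lemma cycPow_pos_row {D : ℕ} (hD : 0 < D) (l : ℕ) (hl : l < D) (x : Fin D) :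
    ∀ a : Fin D, cycPow D (l : ℤ) x a = if a.val = (x.val + D - l) % D then 1 else 0 := by
  haveI : NeZero D := ⟨hD.ne'⟩
  intro a
  simp only [cycPow, Matrix.of_apply]
  congr 1
  simp only [eq_iff_iff]
  have hcast : ((x.val + D - l : ℕ) : ZMod D) = (x.val : ZMod D) - (l : ZMod D) := by
    have h1 : (x.val + D - l : ℕ) = x.val + (D - l) := by omega
    rw [h1, Nat.cast_add, Nat.cast_sub hl.le, ZMod.natCast_self]
    ring
  have hil : (((l : ℤ)) : ZMod D) = (l : ZMod D) := by push_cast; ring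
  rw [hil]
  constructor
  · intro h
    have h2 : (a.val : ZMod D) = ((x.val + D - l : ℕ) : ZMod D) := by
      rw [hcast, h]; ring
    rw [(val_cond a _).mp h2, ZMod.val_natCast]
  · intro h
    have h2 : (a.val : ZMod D) = ((x.val + D - l : ℕ) : ZMod D) := by
      rw [val_cond a _, ZMod.val_natCast]; exact h
    rw [hcast] at h2
    rw [h2]; ring

lemma arith_ddpos {K n v2 : ℕ} (hK : 0 < K) (hn : n < K) (hv2 : v2 < K) (hne : n ≠ v2) :
    0 < (n + K - v2) % K := by
  rcases Nat.eq_zero_or_pos ((n + K - v2) % K) with h0 | hpos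
  · exfalso
    obtain ⟨c, hc⟩ := Nat.dvd_of_mod_eq_zero h0
    rcases c with _ | c
    · omega
    · rcases c with _ | c
      · have h1 : K * 1 = K := by ring
        rw [h1] at hc
        omega
      · have h2 : K * 2 ≤ K * (c + 1 + 1) := Nat.mul_le_mul_left K (by omega)
        rw [← hc] at h2
        omega
  · exact hpos

lemma arith_dvd0 {K M f v2 : ℕ} (hf : f < K * M) (hv2M : M * v2 < K * M) :
    ((K * M : ℕ) : ℤ) ∣ (((f + K * M - M * v2) % (K * M) : ℕ) : ℤ)
      + (M : ℤ) * v2 - f := by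
  have hle : M * v2 ≤ f + K * M := by omega
  have IA := Int.mul_ediv_add_emod ((f : ℤ) + (K : ℤ) * M - (M : ℤ) * v2) ((K : ℤ) * M)
  refine ⟨1 - ((f : ℤ) + (K : ℤ) * M - (M : ℤ) * v2) / ((K : ℤ) * M), ?_⟩
  push_cast [Nat.cast_sub hle]
  linear_combination IA

lemma arith_w {K M l f v2 : ℕ} (hK : 0 < K) (hM : 0 < M) (hl : l < K * M) (hf : f < K * M)
    (hv2 : v2 < K) (hv2M : M * v2 < K * M) :
    (((f + K * M - M * v2) % (K * M)) + K * M - l) % (K * M)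
      = ((((f + K * M - l) % (K * M)) / M + K - v2) % K) * M
        + ((f + K * M - l) % (K * M)) % M := by
  have hD : 0 < K * M := Nat.mul_pos hK hM
  have hUlt : (f + K * M - l) % (K * M) < K * M := Nat.mod_lt _ hD
  have hNlt : (f + K * M - l) % (K * M) / M < K :=
    (Nat.div_lt_iff_lt_mul hM).mpr hUlt
  have hDDlt : ((((f + K * M - l) % (K * M)) / M + K - v2) % K) < K := Nat.mod_lt _ hK
  have hRUlt : ((f + K * M - l) % (K * M)) % M < M := Nat.mod_lt _ hM
  have hbound : ((((f + K * M - l) % (K * M)) / M + K - v2) % K) * M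
      + ((f + K * M - l) % (K * M)) % M < K * M := by
    calc ((((f + K * M - l) % (K * M)) / M + K - v2) % K) * M
          + ((f + K * M - l) % (K * M)) % M
        < ((((f + K * M - l) % (K * M)) / M + K - v2) % K) * M + M := by omega
      _ = (((((f + K * M - l) % (K * M)) / M + K - v2) % K) + 1) * M := by ring
      _ ≤ K * M := Nat.mul_le_mul_right M hDDlt
  apply mod_eq_of_dvd hbound
  have hle1 : M * v2 ≤ f + K * M := by omega
  have hle2 : l ≤ f + K * M := by omega
  have hle3 : l ≤ (f + K * M - M * v2) % (K * M) + K * M := le_trans hl.le (Nat.le_add_left _ _)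
  have hle4 : v2 ≤ ((f + K * M - l) % (K * M)) / M + K := le_trans hv2.le (Nat.le_add_left _ _)
  have IA := Int.mul_ediv_add_emod ((f : ℤ) + (K : ℤ) * M - (M : ℤ) * v2) ((K : ℤ) * M)
  have IU := Int.mul_ediv_add_emod ((f : ℤ) + (K : ℤ) * M - (l : ℤ)) ((K : ℤ) * M)
  have IM := Int.mul_ediv_add_emod (((f : ℤ) + (K : ℤ) * M - (l : ℤ)) % ((K : ℤ) * M)) ((M : ℕ) : ℤ)
  have ID := Int.mul_ediv_add_emod
    ((((f : ℤ) + (K : ℤ) * M - (l : ℤ)) % ((K : ℤ) * M)) / ((M : ℕ) : ℤ) + (K : ℤ) - (v2 : ℤ))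
    ((K : ℕ) : ℤ)
  refine ⟨((f : ℤ) + (K : ℤ) * M - (l : ℤ)) / ((K : ℤ) * M)
    - ((f : ℤ) + (K : ℤ) * M - (M : ℤ) * v2) / ((K : ℤ) * M)
    + ((((f : ℤ) + (K : ℤ) * M - (l : ℤ)) % ((K : ℤ) * M)) / ((M : ℕ) : ℤ)
        + (K : ℤ) - (v2 : ℤ)) / ((K : ℕ) : ℤ), ?_⟩
  push_cast [Nat.cast_sub hle1, Nat.cast_sub hle2, Nat.cast_sub hle3, Nat.cast_sub hle4]
  push_cast at IM ID
  linear_combination IA - IU - (M : ℤ) * ID - IM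

lemma expK (K M : ℕ) (hK : 0 < K) (hM : 0 < M) (k2 n : ℕ) :
    Complex.exp (2 * (Real.pi : ℂ) * Complex.I * ((k2 : ℕ) : ℂ) * ((n : ℕ) : ℂ) / (K : ℂ))
      = eD (K * M) ((M : ℤ) * k2 * n) := by
  have hK0 : (K : ℂ) ≠ 0 := by exact_mod_cast hK.ne'
  have hKM0 : ((K * M : ℕ) : ℂ) ≠ 0 := by exact_mod_cast (Nat.mul_pos hK hM).ne'
  rw [eD]
  congr 1
  rw [div_eq_div_iff hK0 hKM0]
  push_cast
  ring

lemma CZ (K M : ℕ) (hK : 0 < K) (hM : 0 < M) (g : Fin (K * M) → ℂ) (g1 : Fin M → ℂ)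
    (l : ℕ) (hl : l < K * M)
    (hgf : ((Real.sqrt (K * M) : ℝ) : ℂ) • (dftMat (K * M)).mulVec g
      = (cycPow (K * M) (l : ℤ)).mulVec (pad (K * M) M g1))
    (hv : Fin (K * M) → ℂ) (f v : Fin (K * M))
    (hcond : ((f.val + K * M - l) % (K * M)) / M ≠ v.val % K) :
    (dftMat (K * M) * (Matrix.circulant hv * gfdm K M hK hM g)) f v = 0 := by
  have hD : 0 < K * M := Nat.mul_pos hK hM
  have hsne : ((Real.sqrt (K * M) : ℝ) : ℂ) ≠ 0 := by
    simp only [ne_eq, Complex.ofReal_eq_zero]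
    have : (0 : ℝ) < Real.sqrt (K * M) := Real.sqrt_pos.mpr (by positivity)
    linarith
  have hsne' : ((Real.sqrt ((K * M : ℕ) : ℝ) : ℝ) : ℂ) ≠ 0 := by
    rw [show ((K * M : ℕ) : ℝ) = (K : ℝ) * M by push_cast; ring]
    exact hsne
  have hkkK : v.val % K < K := Nat.mod_lt _ hK
  have hmmM : v.val / K < M := Nat.div_lt_of_lt_mul v.isLt
  have hMkk : M * (v.val % K) < K * M := by
    calc M * (v.val % K) < M * K := (Nat.mul_lt_mul_left hM).mpr hkkK
      _ = K * M := mul_comm _ _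
  have hmK : (v.val / K) * K < K * M := by
    calc (v.val / K) * K < M * K := (Nat.mul_lt_mul_right hK).mpr hmmM
      _ = K * M := mul_comm _ _
  have hNlt : (f.val + K * M - l) % (K * M) / M < K :=
    (Nat.div_lt_iff_lt_mul hM).mpr (Nat.mod_lt _ hD)
  set x : Fin (K * M) := ⟨(f.val + K * M - M * (v.val % K)) % (K * M), Nat.mod_lt _ hD⟩ with hx
  have hxv : x.val = (f.val + K * M - M * (v.val % K)) % (K * M) := rfl
  -- key: the shifted DFT of g vanishes at x
  have hfun := congrFun hgf x
  simp only [Pi.smul_apply, Matrix.mulVec, dotProduct, smul_eq_mul] at hfun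
  have hrow := cycPow_pos_row hD l hl x
  have hRHS : (∑ a : Fin (K * M), cycPow (K * M) (l : ℤ) x a * pad (K * M) M g1 a) = 0 := by
    rw [Finset.sum_congr rfl (fun a _ => by rw [hrow a, ite_mul, one_mul, zero_mul]),
      sum_ite_val _ _ (Nat.mod_lt _ hD)]
    show pad (K * M) M g1 ⟨((f.val + K * M - M * (v.val % K)) % (K * M) + K * M - l) % (K * M),
      Nat.mod_lt _ hD⟩ = 0
    have hge : M ≤ ((f.val + K * M - M * (v.val % K)) % (K * M) + K * M - l) % (K * M) := by
      rw [arith_w hK hM hl f.isLt hkkK hMkk]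
      have hdd := arith_ddpos hK hNlt hkkK hcond
      calc M = 1 * M := (one_mul M).symm
        _ ≤ (((f.val + K * M - l) % (K * M)) / M + K - v.val % K) % K * M :=
            Nat.mul_le_mul_right M hdd
        _ ≤ _ := Nat.le_add_right _ _
    simp only [pad]
    rw [dif_neg (by omega)]
  rw [hRHS] at hfun
  have hx0 : (∑ q : Fin (K * M), dftMat (K * M) x q * g q) = 0 := by
    rcases mul_eq_zero.mp hfun with hcase | hcase
    · exact absurd hcase hsne
    · exact hcase
  have hdvd0 := arith_dvd0 f.isLt hMkk
  have hkey : (∑ q : Fin (K * M),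
      g q * eD (K * M) (((M : ℤ) * (v.val % K) - f.val) * q.val)) = 0 := by
    have hterm : ∀ q : Fin (K * M),
        g q * eD (K * M) (((M : ℤ) * (v.val % K) - f.val) * q.val)
        = ((Real.sqrt ((K * M : ℕ) : ℝ) : ℝ) : ℂ) * (dftMat (K * M) x q * g q) := by
      intro q
      rw [dftMat_apply_eD]
      have hph : eD (K * M) (((M : ℤ) * (v.val % K) - f.val) * q.val)
          = eD (K * M) (-(x.val * q.val : ℤ)) := by
        apply eD_congr _ hD
        obtain ⟨t, ht⟩ := hdvd0
        refine ⟨t * q.val, ?_⟩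
        rw [← hxv] at ht
        push_cast at ht ⊢
        linear_combination (q.val : ℤ) * ht
      rw [hph, div_mul_eq_mul_div]
      rw [mul_comm (((Real.sqrt ((K * M : ℕ) : ℝ) : ℝ) : ℂ))
        (eD (K * M) (-(↑↑x * ↑↑q : ℤ)) * g q / ((Real.sqrt ((K * M : ℕ) : ℝ) : ℝ) : ℂ))]
      rw [div_mul_cancel₀ _ hsne']
      ring
    rw [Finset.sum_congr rfl (fun q _ => hterm q), ← Finset.mul_sum, hx0, mul_zero]
  -- main computation
  rw [← Matrix.mul_assoc, Matrix.mul_apply]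
  have hWC : ∀ p : Fin (K * M), (dftMat (K * M) * Matrix.circulant hv) f p
      = (∑ jj : Fin (K * M), hv jj * eD (K * M) (-(f.val * jj.val : ℤ)))
        * dftMat (K * M) f p := by
    intro p
    rw [Matrix.mul_apply,
      ← Equiv.sum_comp (rotFin (K * M) hD p.val p.isLt)
        (fun n => dftMat (K * M) f n * Matrix.circulant hv n p),
      Finset.sum_mul]
    refine Finset.sum_congr rfl (fun jj _ => ?_)
    have hrotval : ((rotFin (K * M) hD p.val p.isLt) jj).val
        = (jj.val + p.val) % (K * M) := rfl
    have hsub : (rotFin (K * M) hD p.val p.isLt) jj - p = jj := by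
      apply Fin.ext
      rw [Fin.sub_def, hrotval]
      show ((K * M) - p.val + ((jj.val + p.val) % (K * M))) % (K * M) = jj.val
      apply mod_eq_of_dvd jj.isLt
      have I := Int.mul_ediv_add_emod ((jj.val : ℤ) + p.val) ((K * M : ℕ) : ℤ)
      refine ⟨1 - ((jj.val : ℤ) + p.val) / ((K * M : ℕ) : ℤ), ?_⟩
      push_cast [Nat.cast_sub p.isLt.le]
      push_cast at I
      linear_combination I
    rw [Matrix.circulant_apply, hsub, dftMat_apply_eD, dftMat_apply_eD]
    have hph2 : eD (K * M) (-(f.val * (((rotFin (K * M) hD p.val p.isLt) jj).val) : ℤ))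
        = eD (K * M) (-(f.val * jj.val : ℤ)) * eD (K * M) (-(f.val * p.val : ℤ)) := by
      rw [← eD_add]
      apply eD_congr _ hD
      rw [hrotval]
      have I := Int.mul_ediv_add_emod ((jj.val : ℤ) + p.val) ((K * M : ℕ) : ℤ)
      refine ⟨(f.val : ℤ) * (((jj.val : ℤ) + p.val) / ((K * M : ℕ) : ℤ)), ?_⟩
      push_cast
      push_cast at I
      linear_combination -(f.val : ℤ) * I
    rw [hph2]
    ring
  rw [Finset.sum_congr rfl (fun p _ => by rw [hWC p, mul_assoc]), ← Finset.mul_sum]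
  have hinner : (∑ p : Fin (K * M), dftMat (K * M) f p * gfdm K M hK hM g p v) = 0 := by
    rw [← Equiv.sum_comp (rotFin (K * M) hD ((v.val / K) * K) hmK)
      (fun p => dftMat (K * M) f p * gfdm K M hK hM g p v)]
    have hterm : ∀ q : Fin (K * M),
        dftMat (K * M) f ((rotFin (K * M) hD ((v.val / K) * K) hmK) q)
          * gfdm K M hK hM g ((rotFin (K * M) hD ((v.val / K) * K) hmK) q) v
        = (g q * eD (K * M) (((M : ℤ) * (v.val % K) - f.val) * q.val))
          * (eD (K * M) (((M : ℤ) * (v.val % K) - f.val) * ((v.val / K) * K))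
              / ((Real.sqrt ((K * M : ℕ) : ℝ) : ℝ) : ℂ)) := by
      intro q
      have hyval : ((rotFin (K * M) hD ((v.val / K) * K) hmK) q).val
          = (q.val + (v.val / K) * K) % (K * M) := rfl
      rw [dftMat_apply_eD]
      show eD (K * M) (-(f.val * (((q.val + (v.val / K) * K) % (K * M) : ℕ)) : ℤ))
          / ((Real.sqrt ((K * M : ℕ) : ℝ) : ℝ) : ℂ)
          * (gfdm K M hK hM g ((rotFin (K * M) hD ((v.val / K) * K) hmK) q) v) = _
      have hgfdm : gfdm K M hK hM g ((rotFin (K * M) hD ((v.val / K) * K) hmK) q) v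
          = g q * eD (K * M) ((M : ℤ) * (v.val % K) * (((q.val + (v.val / K) * K) % (K * M) : ℕ))) := by
        simp only [gfdm, Matrix.of_apply]
        congr 1
        · -- g index
          congr 1
          apply Fin.ext
          show (((q.val + (v.val / K) * K) % (K * M)) + K * M - (v.val / K) * K) % (K * M) = q.val
          apply mod_eq_of_dvd q.isLt
          have I := Int.mul_ediv_add_emod ((q.val : ℤ) + (v.val / K) * K) ((K * M : ℕ) : ℤ)
          refine ⟨1 - ((q.val : ℤ) + (v.val / K) * K) / ((K * M : ℕ) : ℤ), ?_⟩
          push_cast [Nat.cast_sub (show (v.val / K) * K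
            ≤ (q.val + (v.val / K) * K) % (K * M) + K * M from
            le_trans hmK.le (Nat.le_add_left _ _))]
          push_cast at I
          linear_combination I
        · -- phase
          rw [hyval]
          exact expK K M hK hM (v.val % K) _
      rw [hgfdm]
      have hsplit : eD (K * M) (-(f.val * (((q.val + (v.val / K) * K) % (K * M) : ℕ)) : ℤ))
            * eD (K * M) ((M : ℤ) * (v.val % K) * (((q.val + (v.val / K) * K) % (K * M) : ℕ)))
          = eD (K * M) (((M : ℤ) * (v.val % K) - f.val) * q.val)
            * eD (K * M) (((M : ℤ) * (v.val % K) - f.val) * ((v.val / K) * K)) := by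
        rw [← eD_add, ← eD_add]
        apply eD_congr _ hD
        have I := Int.mul_ediv_add_emod ((q.val : ℤ) + (v.val / K) * K) ((K * M : ℕ) : ℤ)
        refine ⟨-(((M : ℤ) * (v.val % K) - f.val) * (((q.val : ℤ) + (v.val / K) * K) / ((K * M : ℕ) : ℤ))), ?_⟩
        push_cast
        push_cast at I
        linear_combination (((M : ℤ) * ((v.val : ℤ) % K) - f.val)) * I
      calc eD (K * M) (-(f.val * (((q.val + (v.val / K) * K) % (K * M) : ℕ)) : ℤ))
            / ((Real.sqrt ((K * M : ℕ) : ℝ) : ℝ) : ℂ)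
            * (g q * eD (K * M) ((M : ℤ) * (v.val % K) * (((q.val + (v.val / K) * K) % (K * M) : ℕ))))
          = g q * (eD (K * M) (-(f.val * (((q.val + (v.val / K) * K) % (K * M) : ℕ)) : ℤ))
              * eD (K * M) ((M : ℤ) * (v.val % K) * (((q.val + (v.val / K) * K) % (K * M) : ℕ))))
              / ((Real.sqrt ((K * M : ℕ) : ℝ) : ℝ) : ℂ) := by ring
        _ = _ := by rw [hsplit]; ring
    rw [Finset.sum_congr rfl (fun q _ => hterm q), ← Finset.sum_mul, hkey, zero_mul]
  rw [hinner, mul_zero]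

lemma Gpp_zero (K M : ℕ) (hK : 0 < K) (hM : 0 < M) (g : Fin (K * M) → ℂ) (g1 : Fin M → ℂ)
    (l : ℕ) (hl : l < K * M)
    (hgf : ((Real.sqrt (K * M) : ℝ) : ℂ) • (dftMat (K * M)).mulVec g
      = (cycPow (K * M) (l : ℤ)).mulVec (pad (K * M) M g1))
    (hv : Fin (K * M) → ℂ) (u q : Fin (K * M))
    (hne : u.val / M ≠ q.val / M) :
    (cycPow (K * M) (-(l : ℤ)) * dftMat (K * M) * (Matrix.circulant hv * gfdm K M hK hM g)
      * (piAB K M)ᴴ) u q = 0 := by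
  have hD : 0 < K * M := Nat.mul_pos hK hM
  have hqM : q.val / M < K := (Nat.div_lt_iff_lt_mul hM).mpr q.isLt
  have hqmod : q.val % M < M := Nat.mod_lt _ hM
  have hb : (q.val % M) * K + q.val / M < K * M := by
    calc (q.val % M) * K + q.val / M < (q.val % M) * K + K := by omega
      _ = (q.val % M + 1) * K := by ring
      _ ≤ M * K := Nat.mul_le_mul_right K hqmod
      _ = K * M := mul_comm _ _
  have hQrow : ∀ b : Fin (K * M),
      piAB K M q b = if b.val = (q.val % M) * K + q.val / M then 1 else 0 := by
    intro b
    simp only [piAB, Matrix.of_apply]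
    congr 1
    simp only [eq_iff_iff]
    constructor
    · rintro ⟨h1, h2⟩
      have hdm := Nat.div_add_mod b.val K
      rw [← h2, ← h1] at hdm
      rw [← hdm]; ring
    · intro hbv
      have hdm := divmod_of_eq hK hqM hbv
      exact ⟨hdm.2.symm, hdm.1.symm⟩
  rw [mul_perm_collapse_right _ (piAB K M) q _ hb hQrow u, Matrix.mul_assoc,
    mul_perm_collapse_left (cycPow (K * M) (-(l : ℤ))) _ u ((u.val + l) % (K * M))
      (Nat.mod_lt _ hD) (cycPow_row hD l hl u)]
  apply CZ K M hK hM g g1 l hl hgf hv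
  have hfval : (((u.val + l) % (K * M)) + K * M - l) % (K * M) = u.val := by
    apply mod_eq_of_dvd u.isLt
    have I := Int.mul_ediv_add_emod ((u.val : ℤ) + l) ((K * M : ℕ) : ℤ)
    refine ⟨1 - ((u.val : ℤ) + l) / ((K * M : ℕ) : ℤ), ?_⟩
    push_cast [Nat.cast_sub (show l ≤ (u.val + l) % (K * M) + K * M by
      have := hl.le; omega)]
    push_cast at I
    linear_combination I
  have hvmod : ((q.val % M) * K + q.val / M) % K = q.val / M := (divmod_of_eq hK hqM rfl).2
  show (((u.val + l) % (K * M)) + K * M - l) % (K * M) / M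
    ≠ ((q.val % M) * K + q.val / M) % K
  rw [hfval, hvmod]
  exact hne

lemma iteOne_mul_iteOne {P1 P2 Q : Prop} [Decidable P1] [Decidable P2] [Decidable Q]
    (h : (P1 ∧ P2) ↔ Q) :
    ((if P1 then (1 : ℂ) else 0) * (if P2 then 1 else 0)) = if Q then 1 else 0 := by
  by_cases h1 : P1 <;> by_cases h2 : P2 <;>
    simp only [if_pos, if_neg, h1, h2, ite_true, ite_false, one_mul, zero_mul, mul_zero,
      mul_one] <;>
    [rw [if_pos (h.mp ⟨h1, h2⟩)]; rw [if_neg (fun hq => h2 (h.mpr hq).2)];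
     rw [if_neg (fun hq => h1 (h.mpr hq).1)]; rw [if_neg (fun hq => h1 (h.mpr hq).1)]]

lemma castKron_row (Kk Rr Mm : ℕ) (hMm : 0 < Mm) (hRr : 0 < Rr) (hKk : 0 < Kk)
    (e : (Kk * Rr) * Mm = Rr * (Kk * Mm)) (i a : Fin (Rr * (Kk * Mm))) :
    castM e e (kron (piAB Kk Rr) (1 : Matrix (Fin Mm) (Fin Mm) ℂ)) i a
      = if a.val = ((i.val / Mm % Rr) * Kk + i.val / Mm / Rr) * Mm + i.val % Mm then 1
        else 0 := by
  have hk0 : i.val / Mm / Rr < Kk := by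
    apply Nat.div_lt_of_lt_mul
    apply Nat.div_lt_of_lt_mul
    calc i.val < Rr * (Kk * Mm) := i.isLt
      _ = Mm * (Rr * Kk) := by ring
  have hmu : i.val % Mm < Mm := Nat.mod_lt _ hMm
  rw [castM_apply]
  simp only [kron, Matrix.of_apply, piAB, Matrix.one_apply]
  have hdivval : ∀ (z : Fin ((Kk * Rr) * Mm)), (z.divNat).val = z.val / Mm :=
    fun z => Fin.coe_divNat z
  have hmodval : ∀ (z : Fin ((Kk * Rr) * Mm)), (z.modNat).val = z.val % Mm :=
    fun z => Fin.coe_modNat z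
  apply iteOne_mul_iteOne
  constructor
  · rintro ⟨⟨h1, h2⟩, h3⟩
    rw [hdivval, hdivval] at h1 h2
    have h3' : i.val % Mm = a.val % Mm := by
      have := congrArg Fin.val h3
      rwa [hmodval, hmodval] at this
    have hdm1 := Nat.div_add_mod (a.val / Mm) Kk
    rw [← h1, ← h2] at hdm1
    have hdm2 := Nat.div_add_mod a.val Mm
    rw [← hdm1] at hdm2
    rw [← hdm2, ← h3']
    ring
  · intro hq
    have hdm := divmod_of_eq hMm hmu hq
    have hdm2 := divmod_of_eq (B := Kk) hKk hk0 hdm.1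
    refine ⟨⟨?_, ?_⟩, ?_⟩
    · rw [hdivval, hdivval, hdm2.2]
    · rw [hdivval, hdivval, hdm2.1]
    · apply Fin.ext
      rw [hmodval, hmodval, hdm.2]

def Fmat (K M T R l : ℕ) (hK : 0 < K) (hM : 0 < M) (g : Fin (K * M) → ℂ)
    (h : Fin R → Fin T → Fin (K * M) → ℂ) : Fin K → Matrix (Fin (M * R)) (Fin (M * T)) ℂ :=
  fun k => Matrix.of fun p q =>
    (cycPow (K * M) (-(l : ℤ)) * dftMat (K * M)
      * (Matrix.circulant (h ⟨p.val / M, Nat.div_lt_of_lt_mul p.isLt⟩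
            ⟨q.val / M, Nat.div_lt_of_lt_mul q.isLt⟩) * gfdm K M hK hM g)
      * (piAB K M)ᴴ)
      ⟨k.val * M + p.val % M, by
        calc k.val * M + p.val % M < k.val * M + M := Nat.add_lt_add_left (Nat.mod_lt _ hM) _
          _ = (k.val + 1) * M := by ring
          _ ≤ K * M := Nat.mul_le_mul_right M k.isLt⟩
      ⟨k.val * M + q.val % M, by
        calc k.val * M + q.val % M < k.val * M + M := Nat.add_lt_add_left (Nat.mod_lt _ hM) _
          _ = (k.val + 1) * M := by ring
          _ ≤ K * M := Nat.mul_le_mul_right M k.isLt⟩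

lemma sandwich {n m : ℕ} (U : Matrix (Fin n) (Fin n) ℂ) (P : Matrix (Fin m) (Fin m) ℂ)
    (X : Matrix (Fin n) (Fin m) ℂ) (hU : Uᴴ * U = 1) (hP : Pᴴ * P = 1) :
    Uᴴ * (U * X * Pᴴ) * P = X := by
  calc Uᴴ * (U * X * Pᴴ) * P = (Uᴴ * U) * X * (Pᴴ * P) := by simp only [Matrix.mul_assoc]
    _ = X := by rw [hU, hP, Matrix.one_mul, Matrix.mul_one]

lemma final (K M T R : ℕ) (hK : 0 < K) (hM : 0 < M) (hT : 0 < T) (hR : 0 < R)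
    (g : Fin (K * M) → ℂ) (g1 : Fin M → ℂ) (l : ℕ) (hl : l < K * M)
    (hgf : ((Real.sqrt (K * M) : ℝ) : ℂ) • (dftMat (K * M)).mulVec g
      = (cycPow (K * M) (l : ℤ)).mulVec (pad (K * M) M g1))
    (h : Fin R → Fin T → Fin (K * M) → ℂ)
    (e1 : (K * R) * M = R * (K * M)) (e2 : K * (M * R) = R * (K * M))
    (e3 : K * (M * T) = T * (K * M)) (e4 : (K * T) * M = T * (K * M)) :
    blockFlat (fun r t => Matrix.circulant (h r t) * gfdm K M hK hM g)
      = (castM e1 e1 (kron (piAB K R) (1 : Matrix (Fin M) (Fin M) ℂ))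
          * kron (1 : Matrix (Fin R) (Fin R) ℂ) (cycPow (K * M) (-(l : ℤ)) * dftMat (K * M)))ᴴ
        * castM e2 e3 (blkdiag (Fmat K M T R l hK hM g h))
        * (castM e4 e4 (kron (piAB K T) (1 : Matrix (Fin M) (Fin M) ℂ))
          * kron (1 : Matrix (Fin T) (Fin T) ℂ) (piAB K M)) := by
  have hD : 0 < K * M := Nat.mul_pos hK hM
  have hWHu : (cycPow (K * M) (-(l : ℤ)) * dftMat (K * M))ᴴ
      * (cycPow (K * M) (-(l : ℤ)) * dftMat (K * M)) = 1 := by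
    rw [Matrix.conjTranspose_mul]
    calc (dftMat (K * M))ᴴ * (cycPow (K * M) (-(l : ℤ)))ᴴ
          * (cycPow (K * M) (-(l : ℤ)) * dftMat (K * M))
        = (dftMat (K * M))ᴴ * (((cycPow (K * M) (-(l : ℤ)))ᴴ * cycPow (K * M) (-(l : ℤ)))
            * dftMat (K * M)) := by simp only [Matrix.mul_assoc]
      _ = 1 := by rw [cyc_unitary _ hD, Matrix.one_mul, dft_unitary _ hD]
  have hQ1 : (castM e1 e1 (kron (piAB K R) (1 : Matrix (Fin M) (Fin M) ℂ)))ᴴ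
      * castM e1 e1 (kron (piAB K R) (1 : Matrix (Fin M) (Fin M) ℂ)) = 1 := by
    rw [castM_conjT, castM_mul, kron_conjT, kron_mul, piAB_unitary K R hK hR,
      Matrix.conjTranspose_one, Matrix.one_mul, kron_one_one, castM_one]
  have hQ2 : (kron (1 : Matrix (Fin R) (Fin R) ℂ) (cycPow (K * M) (-(l : ℤ)) * dftMat (K * M)))ᴴ
      * kron (1 : Matrix (Fin R) (Fin R) ℂ) (cycPow (K * M) (-(l : ℤ)) * dftMat (K * M)) = 1 := by
    rw [kron_conjT, Matrix.conjTranspose_one, kron_mul, Matrix.one_mul, hWHu, kron_one_one]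
  have hU : (castM e1 e1 (kron (piAB K R) (1 : Matrix (Fin M) (Fin M) ℂ))
        * kron (1 : Matrix (Fin R) (Fin R) ℂ) (cycPow (K * M) (-(l : ℤ)) * dftMat (K * M)))ᴴ
      * (castM e1 e1 (kron (piAB K R) (1 : Matrix (Fin M) (Fin M) ℂ))
        * kron (1 : Matrix (Fin R) (Fin R) ℂ) (cycPow (K * M) (-(l : ℤ)) * dftMat (K * M)))
      = 1 := by
    rw [Matrix.conjTranspose_mul]
    calc (kron (1 : Matrix (Fin R) (Fin R) ℂ) (cycPow (K * M) (-(l : ℤ)) * dftMat (K * M)))ᴴ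
          * (castM e1 e1 (kron (piAB K R) (1 : Matrix (Fin M) (Fin M) ℂ)))ᴴ
          * (castM e1 e1 (kron (piAB K R) (1 : Matrix (Fin M) (Fin M) ℂ))
            * kron (1 : Matrix (Fin R) (Fin R) ℂ) (cycPow (K * M) (-(l : ℤ)) * dftMat (K * M)))
        = (kron (1 : Matrix (Fin R) (Fin R) ℂ) (cycPow (K * M) (-(l : ℤ)) * dftMat (K * M)))ᴴ
          * (((castM e1 e1 (kron (piAB K R) (1 : Matrix (Fin M) (Fin M) ℂ)))ᴴ
              * castM e1 e1 (kron (piAB K R) (1 : Matrix (Fin M) (Fin M) ℂ)))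
            * kron (1 : Matrix (Fin R) (Fin R) ℂ) (cycPow (K * M) (-(l : ℤ)) * dftMat (K * M)))
          := by simp only [Matrix.mul_assoc]
      _ = 1 := by rw [hQ1, Matrix.one_mul, hQ2]
  have hQ3 : (castM e4 e4 (kron (piAB K T) (1 : Matrix (Fin M) (Fin M) ℂ)))ᴴ
      * castM e4 e4 (kron (piAB K T) (1 : Matrix (Fin M) (Fin M) ℂ)) = 1 := by
    rw [castM_conjT, castM_mul, kron_conjT, kron_mul, piAB_unitary K T hK hT,
      Matrix.conjTranspose_one, Matrix.one_mul, kron_one_one, castM_one]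
  have hQ4 : (kron (1 : Matrix (Fin T) (Fin T) ℂ) (piAB K M))ᴴ
      * kron (1 : Matrix (Fin T) (Fin T) ℂ) (piAB K M) = 1 := by
    rw [kron_conjT, Matrix.conjTranspose_one, kron_mul, Matrix.one_mul,
      piAB_unitary K M hK hM, kron_one_one]
  have hP : (castM e4 e4 (kron (piAB K T) (1 : Matrix (Fin M) (Fin M) ℂ))
        * kron (1 : Matrix (Fin T) (Fin T) ℂ) (piAB K M))ᴴ
      * (castM e4 e4 (kron (piAB K T) (1 : Matrix (Fin M) (Fin M) ℂ))
        * kron (1 : Matrix (Fin T) (Fin T) ℂ) (piAB K M)) = 1 := by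
    rw [Matrix.conjTranspose_mul]
    calc (kron (1 : Matrix (Fin T) (Fin T) ℂ) (piAB K M))ᴴ
          * (castM e4 e4 (kron (piAB K T) (1 : Matrix (Fin M) (Fin M) ℂ)))ᴴ
          * (castM e4 e4 (kron (piAB K T) (1 : Matrix (Fin M) (Fin M) ℂ))
            * kron (1 : Matrix (Fin T) (Fin T) ℂ) (piAB K M))
        = (kron (1 : Matrix (Fin T) (Fin T) ℂ) (piAB K M))ᴴ
          * (((castM e4 e4 (kron (piAB K T) (1 : Matrix (Fin M) (Fin M) ℂ)))ᴴ
              * castM e4 e4 (kron (piAB K T) (1 : Matrix (Fin M) (Fin M) ℂ)))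
            * kron (1 : Matrix (Fin T) (Fin T) ℂ) (piAB K M)) := by
          simp only [Matrix.mul_assoc]
      _ = 1 := by rw [hQ3, Matrix.one_mul, hQ4]
  have hMain : (castM e1 e1 (kron (piAB K R) (1 : Matrix (Fin M) (Fin M) ℂ))
        * kron (1 : Matrix (Fin R) (Fin R) ℂ) (cycPow (K * M) (-(l : ℤ)) * dftMat (K * M)))
      * blockFlat (fun r t => Matrix.circulant (h r t) * gfdm K M hK hM g)
      * (castM e4 e4 (kron (piAB K T) (1 : Matrix (Fin M) (Fin M) ℂ))
        * kron (1 : Matrix (Fin T) (Fin T) ℂ) (piAB K M))ᴴ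
      = castM e2 e3 (blkdiag (Fmat K M T R l hK hM g h)) := by
    rw [Matrix.conjTranspose_mul]
    have hs1 : kron (1 : Matrix (Fin R) (Fin R) ℂ) (cycPow (K * M) (-(l : ℤ)) * dftMat (K * M))
        * blockFlat (fun r t => Matrix.circulant (h r t) * gfdm K M hK hM g)
        = blockFlat (fun r t => cycPow (K * M) (-(l : ℤ)) * dftMat (K * M)
            * (Matrix.circulant (h r t) * gfdm K M hK hM g)) :=
      kron_one_mul_blockFlat _ _
    have hs2 : blockFlat (fun r t => cycPow (K * M) (-(l : ℤ)) * dftMat (K * M)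
          * (Matrix.circulant (h r t) * gfdm K M hK hM g))
        * (kron (1 : Matrix (Fin T) (Fin T) ℂ) (piAB K M))ᴴ
        = blockFlat (fun r t => cycPow (K * M) (-(l : ℤ)) * dftMat (K * M)
            * (Matrix.circulant (h r t) * gfdm K M hK hM g) * (piAB K M)ᴴ) := by
      rw [kron_conjT, Matrix.conjTranspose_one]
      exact blockFlat_mul_kron_one _ _
    calc castM e1 e1 (kron (piAB K R) (1 : Matrix (Fin M) (Fin M) ℂ))
          * kron (1 : Matrix (Fin R) (Fin R) ℂ) (cycPow (K * M) (-(l : ℤ)) * dftMat (K * M))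
          * blockFlat (fun r t => Matrix.circulant (h r t) * gfdm K M hK hM g)
          * ((kron (1 : Matrix (Fin T) (Fin T) ℂ) (piAB K M))ᴴ
            * (castM e4 e4 (kron (piAB K T) (1 : Matrix (Fin M) (Fin M) ℂ)))ᴴ)
        = castM e1 e1 (kron (piAB K R) (1 : Matrix (Fin M) (Fin M) ℂ))
          * ((kron (1 : Matrix (Fin R) (Fin R) ℂ) (cycPow (K * M) (-(l : ℤ)) * dftMat (K * M))
              * blockFlat (fun r t => Matrix.circulant (h r t) * gfdm K M hK hM g)
              * (kron (1 : Matrix (Fin T) (Fin T) ℂ) (piAB K M))ᴴ)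
            * (castM e4 e4 (kron (piAB K T) (1 : Matrix (Fin M) (Fin M) ℂ)))ᴴ) := by
          simp only [Matrix.mul_assoc]
      _ = castM e1 e1 (kron (piAB K R) (1 : Matrix (Fin M) (Fin M) ℂ))
          * (blockFlat (fun r t => cycPow (K * M) (-(l : ℤ)) * dftMat (K * M)
              * (Matrix.circulant (h r t) * gfdm K M hK hM g) * (piAB K M)ᴴ)
            * (castM e4 e4 (kron (piAB K T) (1 : Matrix (Fin M) (Fin M) ℂ)))ᴴ) := by
          rw [hs1, hs2]
      _ = castM e2 e3 (blkdiag (Fmat K M T R l hK hM g h)) := by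
          ext i j
          have hiMR : i.val / M / R < K := by
            apply Nat.div_lt_of_lt_mul
            apply Nat.div_lt_of_lt_mul
            calc i.val < R * (K * M) := i.isLt
              _ = M * (R * K) := by ring
          have hjMT : j.val / M / T < K := by
            apply Nat.div_lt_of_lt_mul
            apply Nat.div_lt_of_lt_mul
            calc j.val < T * (K * M) := j.isLt
              _ = M * (T * K) := by ring
          have hrR : i.val / M % R < R := Nat.mod_lt _ hR
          have htT : j.val / M % T < T := Nat.mod_lt _ hT
          have hmui : i.val % M < M := Nat.mod_lt _ hM
          have hmuj : j.val % M < M := Nat.mod_lt _ hM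
          have hsubi : (i.val / M / R) * M + i.val % M < K * M := by
            calc (i.val / M / R) * M + i.val % M < (i.val / M / R) * M + M := by omega
              _ = (i.val / M / R + 1) * M := by ring
              _ ≤ K * M := Nat.mul_le_mul_right M hiMR
          have hsubj : (j.val / M / T) * M + j.val % M < K * M := by
            calc (j.val / M / T) * M + j.val % M < (j.val / M / T) * M + M := by omega
              _ = (j.val / M / T + 1) * M := by ring
              _ ≤ K * M := Nat.mul_le_mul_right M hjMT
          have hc1 : ((i.val / M % R) * K + i.val / M / R) * M + i.val % M < R * (K * M) := by
            have hx : (i.val / M % R) * K + i.val / M / R < R * K := by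
              calc (i.val / M % R) * K + i.val / M / R < (i.val / M % R) * K + K := by omega
                _ = (i.val / M % R + 1) * K := by ring
                _ ≤ R * K := Nat.mul_le_mul_right K hrR
            calc ((i.val / M % R) * K + i.val / M / R) * M + i.val % M
                < ((i.val / M % R) * K + i.val / M / R) * M + M := by omega
              _ = ((i.val / M % R) * K + i.val / M / R + 1) * M := by ring
              _ ≤ (R * K) * M := Nat.mul_le_mul_right M hx
              _ = R * (K * M) := by ring
          have hc2 : ((j.val / M % T) * K + j.val / M / T) * M + j.val % M < T * (K * M) := by
            have hx : (j.val / M % T) * K + j.val / M / T < T * K := by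
              calc (j.val / M % T) * K + j.val / M / T < (j.val / M % T) * K + K := by omega
                _ = (j.val / M % T + 1) * K := by ring
                _ ≤ T * K := Nat.mul_le_mul_right K htT
            calc ((j.val / M % T) * K + j.val / M / T) * M + j.val % M
                < ((j.val / M % T) * K + j.val / M / T) * M + M := by omega
              _ = ((j.val / M % T) * K + j.val / M / T + 1) * M := by ring
              _ ≤ (T * K) * M := Nat.mul_le_mul_right M hx
              _ = T * (K * M) := by ring
          rw [mul_perm_collapse_left _ _ i _ hc1 (fun a => castKron_row K R M hM hR hK e1 i a),
            mul_perm_collapse_right _ _ j _ hc2 (fun b => castKron_row K T M hM hT hK e4 j b),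
            castM_apply]
          -- nat-level div/mod facts
          have hdc1 := divmod_of_eq (B := K * M) hD hsubi
            (show ((i.val / M % R) * K + i.val / M / R) * M + i.val % M
              = (i.val / M % R) * (K * M) + ((i.val / M / R) * M + i.val % M) by ring)
          have hdc2 := divmod_of_eq (B := K * M) hD hsubj
            (show ((j.val / M % T) * K + j.val / M / T) * M + j.val % M
              = (j.val / M % T) * (K * M) + ((j.val / M / T) * M + j.val % M) by ring)
          have hiexp : i.val = (i.val / M / R) * (M * R) + ((i.val / M % R) * M + i.val % M) := by
            have h1 := Nat.div_add_mod i.val M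
            have h2 := Nat.div_add_mod (i.val / M) R
            calc i.val = M * (i.val / M) + i.val % M := h1.symm
              _ = M * (R * (i.val / M / R) + i.val / M % R) + i.val % M := by rw [h2]
              _ = (i.val / M / R) * (M * R) + ((i.val / M % R) * M + i.val % M) := by ring
          have hjexp : j.val = (j.val / M / T) * (M * T) + ((j.val / M % T) * M + j.val % M) := by
            have h1 := Nat.div_add_mod j.val M
            have h2 := Nat.div_add_mod (j.val / M) T
            calc j.val = M * (j.val / M) + j.val % M := h1.symm
              _ = M * (T * (j.val / M / T) + j.val / M % T) + j.val % M := by rw [h2]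
              _ = (j.val / M / T) * (M * T) + ((j.val / M % T) * M + j.val % M) := by ring
          have hsubi' : (i.val / M % R) * M + i.val % M < M * R := by
            calc (i.val / M % R) * M + i.val % M < (i.val / M % R) * M + M := by omega
              _ = (i.val / M % R + 1) * M := by ring
              _ ≤ R * M := Nat.mul_le_mul_right M hrR
              _ = M * R := mul_comm _ _
          have hsubj' : (j.val / M % T) * M + j.val % M < M * T := by
            calc (j.val / M % T) * M + j.val % M < (j.val / M % T) * M + M := by omega
              _ = (j.val / M % T + 1) * M := by ring
              _ ≤ T * M := Nat.mul_le_mul_right M htT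
              _ = M * T := mul_comm _ _
          have hdi := divmod_of_eq (B := M * R) (Nat.mul_pos hM hR) hsubi' hiexp
          have hdj := divmod_of_eq (B := M * T) (Nat.mul_pos hM hT) hsubj' hjexp
          have hpv := divmod_of_eq (B := M) hM hmui hdi.2
          have hqv := divmod_of_eq (B := M) hM hmuj hdj.2
          simp only [blockFlat, blkdiag, Fmat, Matrix.of_apply]
          have congr4 : ∀ (r r' : Fin R) (t t' : Fin T) (u u' v v' : Fin (K * M)),
              r = r' → t = t' → u = u' → v = v' →
              (cycPow (K * M) (-(l : ℤ)) * dftMat (K * M)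
                * (Matrix.circulant (h r t) * gfdm K M hK hM g) * (piAB K M)ᴴ) u v
              = (cycPow (K * M) (-(l : ℤ)) * dftMat (K * M)
                * (Matrix.circulant (h r' t') * gfdm K M hK hM g) * (piAB K M)ᴴ) u' v' := by
            rintro r r' t t' u u' v v' rfl rfl rfl rfl; rfl
          split_ifs with hkk
          · -- diagonal block
            have hkkv : i.val / (M * R) = j.val / (M * T) := by
              have := congrArg Fin.val hkk
              rwa [Fin.coe_divNat, Fin.coe_divNat] at this
            have hkk2 : i.val / M / R = j.val / M / T := by
              rw [← hdi.1, ← hdj.1]; exact hkkv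
            apply congr4
            · exact Fin.ext (hdc1.1.trans hpv.1.symm)
            · exact Fin.ext (hdc2.1.trans hqv.1.symm)
            · refine Fin.ext (hdc1.2.trans ?_)
              show (i.val / M / R) * M + i.val % M = i.val / (M * R) * M + (i.val % (M * R)) % M
              rw [hdi.1, hpv.2]
            · refine Fin.ext (hdc2.2.trans ?_)
              show (j.val / M / T) * M + j.val % M = i.val / (M * R) * M + (j.val % (M * T)) % M
              rw [hdi.1, hqv.2, hkk2]
          · -- off-diagonal block
            have hkkv : i.val / M / R ≠ j.val / M / T := by
              intro hcontra
              apply hkk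
              apply Fin.ext
              rw [Fin.coe_divNat, Fin.coe_divNat, hdi.1, hdj.1]
              exact hcontra
            have hLeq : (cycPow (K * M) (-(l : ℤ)) * dftMat (K * M)
                  * (Matrix.circulant (h (⟨((i.val / M % R) * K + i.val / M / R) * M + i.val % M,
                        hc1⟩ : Fin (R * (K * M))).divNat
                      ((⟨((j.val / M % T) * K + j.val / M / T) * M + j.val % M,
                        hc2⟩ : Fin (T * (K * M))).divNat))
                    * gfdm K M hK hM g) * (piAB K M)ᴴ)
                  (⟨((i.val / M % R) * K + i.val / M / R) * M + i.val % M,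
                    hc1⟩ : Fin (R * (K * M))).modNat
                  (⟨((j.val / M % T) * K + j.val / M / T) * M + j.val % M,
                    hc2⟩ : Fin (T * (K * M))).modNat
                = (cycPow (K * M) (-(l : ℤ)) * dftMat (K * M)
                  * (Matrix.circulant (h ⟨i.val / M % R, hrR⟩ ⟨j.val / M % T, htT⟩)
                    * gfdm K M hK hM g) * (piAB K M)ᴴ)
                  ⟨(i.val / M / R) * M + i.val % M, hsubi⟩
                  ⟨(j.val / M / T) * M + j.val % M, hsubj⟩ := by
              apply congr4
              · exact Fin.ext hdc1.1
              · exact Fin.ext hdc2.1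
              · exact Fin.ext hdc1.2
              · exact Fin.ext hdc2.2
            rw [hLeq]
            apply Gpp_zero K M hK hM g g1 l hl hgf
            show ((i.val / M / R) * M + i.val % M) / M ≠ ((j.val / M / T) * M + j.val % M) / M
            rw [(divmod_of_eq hM hmui rfl).1, (divmod_of_eq hM hmuj rfl).1]
            exact hkkv
  rw [← hMain, sandwich _ _ _ hU hP]
/-- Theorem 1, existential form: under the ICI-free hypothesis on `g`,
with circulant channels `H_{r,t}` and `H̃` the block matrix with blocks `H_{r,t}·A`,
there exist `MR×MT` matrices `F_k` such that
`H̃ = Uᴴ · blkdiag({F_k}_{k=0}^{K-1}) · P`, where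
`U = (Π_{KR} ⊗ I_M)(I_R ⊗ Π_D^{-l} W_D)` and `P = (Π_{KT} ⊗ I_M)(I_T ⊗ Π_{KM})`. -/
theorem stmt5 (K M T R : ℕ) (hK : 0 < K) (hM : 0 < M) (hT : 0 < T) (hR : 0 < R)
    (g : Fin (K * M) → ℂ) (g1 : Fin M → ℂ) (l : ℕ) (hl : l < K * M)
    (hgf : ((Real.sqrt (K * M) : ℝ) : ℂ) • (dftMat (K * M)).mulVec g
      = (cycPow (K * M) (l : ℤ)).mulVec (pad (K * M) M g1))
    (h : Fin R → Fin T → Fin (K * M) → ℂ)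
    (H : Fin R → Fin T → Matrix (Fin (K * M)) (Fin (K * M)) ℂ)
    (hH : ∀ r t, H r t = Matrix.circulant (h r t)) :
    ∃ F : Fin K → Matrix (Fin (M * R)) (Fin (M * T)) ℂ,
      blockFlat (fun r t => H r t * gfdm K M hK hM g)
        = (castM (show (K * R) * M = R * (K * M) by ring)
              (show (K * R) * M = R * (K * M) by ring)
              (kron (piAB K R) (1 : Matrix (Fin M) (Fin M) ℂ)) *
            kron (1 : Matrix (Fin R) (Fin R) ℂ)
              (cycPow (K * M) (-(l : ℤ)) * dftMat (K * M)))ᴴ *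
          castM (show K * (M * R) = R * (K * M) by ring)
            (show K * (M * T) = T * (K * M) by ring) (blkdiag F) *
          (castM (show (K * T) * M = T * (K * M) by ring)
              (show (K * T) * M = T * (K * M) by ring)
              (kron (piAB K T) (1 : Matrix (Fin M) (Fin M) ℂ)) *
            kron (1 : Matrix (Fin T) (Fin T) ℂ) (piAB K M)) := by
  refine ⟨Fmat K M T R l hK hM g h, ?_⟩
  have hHe : (fun r t => H r t * gfdm K M hK hM g)
      = fun r t => Matrix.circulant (h r t) * gfdm K M hK hM g := by
    funext r t
    rw [hH]
  rw [hHe]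
  exact final K M T R hK hM hT hR g g1 l hl hgf h _ _ _ _
end
end
end

section
/- OFDM special case: Let M = 1, so D = K, and let g ∈ ℂ^D be a prototype filter whose frequency-domain version g_f = √D · W_D · g has exactly one (possibly) nonzero entry, namely [g_f]_l = c for some 0 ≤ l < D and c ∈ ℂ, with all other entries zero. Then the GFDM transmitter matrix A of g satisfies A = (c/√K) · W_D^H · Π_D^{l}. In particular, every column of A is a scalar multiple of a column of the inverse DFT matrix W_D^H, so the GFDM system reduces to OFDM. -/
open Matrix Complex

noncomputable section

lemma stmt9_sum_root (D : ℕ) (hD : 0 < D) (t : ℤ) :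
    ∑ p : Fin D, Complex.exp (2 * (Real.pi:ℂ) * Complex.I * t * p / D)
      = if (D:ℤ) ∣ t then (D:ℂ) else 0 := by
  have hD' : (D:ℂ) ≠ 0 := Nat.cast_ne_zero.2 hD.ne'
  have h1 : ∀ p : Fin D, Complex.exp (2 * (Real.pi:ℂ) * Complex.I * t * p / D)
      = Complex.exp (2 * (Real.pi:ℂ) * Complex.I * t / D) ^ (p : ℕ) := by
    intro p
    rw [← Complex.exp_nat_mul]
    congr 1
    ring
  simp only [h1]
  rw [Fin.sum_univ_eq_sum_range]
  by_cases hdvd : (D:ℤ) ∣ t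
  · obtain ⟨k, rfl⟩ := hdvd
    have hx : Complex.exp (2 * (Real.pi:ℂ) * Complex.I * (↑(↑D * k)) / D) = 1 := by
      rw [Complex.exp_eq_one_iff]
      refine ⟨k, ?_⟩
      push_cast
      field_simp
    push_cast at hx
    rw [if_pos (dvd_mul_right (D:ℤ) k)]
    simp [hx]
  · have hx1 : Complex.exp (2 * (Real.pi:ℂ) * Complex.I * t / D) ≠ 1 := by
      rw [Ne, Complex.exp_eq_one_iff]
      rintro ⟨n, hn⟩
      apply hdvd
      refine ⟨n, ?_⟩
      have hpi : (Real.pi:ℂ) ≠ 0 := Complex.ofReal_ne_zero.2 Real.pi_ne_zero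
      have : (t:ℂ) = (D:ℂ) * n := by
        field_simp at hn
        have hI := Complex.I_ne_zero
        have h2 : (2:ℂ) ≠ 0 := two_ne_zero
        apply mul_left_cancel₀ (mul_ne_zero (mul_ne_zero h2 hpi) hI)
        linear_combination (2 * (Real.pi:ℂ) * Complex.I) * hn
      exact_mod_cast this
    have hxD : Complex.exp (2 * (Real.pi:ℂ) * Complex.I * t / D) ^ D = 1 := by
      rw [← Complex.exp_nat_mul, Complex.exp_eq_one_iff]
      refine ⟨t, ?_⟩
      field_simp
    rw [geom_sum_eq hx1, hxD, if_neg hdvd]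
    simp

lemma stmt9_g_eq (K : ℕ) (hK : 0 < K) (g : Fin (K * 1) → ℂ) (l : ℕ) (hl : l < K * 1)
    (c : ℂ)
    (hgf : ((Real.sqrt (K * 1) : ℝ) : ℂ) • (dftMat (K * 1)).mulVec g
      = fun i => if i.val = l then c else 0) (n : Fin (K * 1)) :
    g n = c * Complex.exp (2 * (Real.pi:ℂ) * Complex.I * l * n / (K:ℂ)) / (K:ℂ) := by
  have hD : 0 < K * 1 := by omega
  have hK' : ((K : ℕ):ℂ) ≠ 0 := Nat.cast_ne_zero.2 hK.ne'
  have hsK : ((Real.sqrt K : ℝ) : ℂ) ≠ 0 :=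
    Complex.ofReal_ne_zero.2 (Real.sqrt_pos.2 (by exact_mod_cast hK)).ne'
  have hgf' : ∀ p : Fin (K * 1),
      ∑ m : Fin (K * 1), Complex.exp (-2 * (Real.pi:ℂ) * Complex.I * p * m / (K:ℂ)) * g m
        = if p.val = l then c else 0 := by
    intro p
    have h := congrFun hgf p
    simp only [Pi.smul_apply, Matrix.mulVec, dotProduct, dftMat, Matrix.of_apply,
      smul_eq_mul, Finset.mul_sum, Nat.cast_mul, Nat.cast_one, mul_one,
      Complex.ofReal_one] at h
    rw [← h]
    refine Finset.sum_congr rfl fun m _ => ?_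
    field_simp
  have key : ((K : ℕ):ℂ) * g n
      = Complex.exp (2 * (Real.pi:ℂ) * Complex.I * l * n / (K:ℂ)) * c := by
    have h2 : ∑ p : Fin (K * 1), Complex.exp (2 * (Real.pi:ℂ) * Complex.I * p * n / (K:ℂ)) *
          (if p.val = l then c else 0)
        = Complex.exp (2 * (Real.pi:ℂ) * Complex.I * l * n / (K:ℂ)) * c := by
      rw [Finset.sum_eq_single (⟨l, hl⟩ : Fin (K * 1))]
      · simp
      · intro p _ hp
        rw [if_neg, mul_zero]
        exact fun h => hp (Fin.ext h)
      · simp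
    rw [← h2]
    simp only [← hgf']
    have h3 : ∀ p : Fin (K * 1),
        Complex.exp (2 * (Real.pi:ℂ) * Complex.I * p * n / (K:ℂ)) *
          ∑ m : Fin (K * 1), Complex.exp (-2 * (Real.pi:ℂ) * Complex.I * p * m / (K:ℂ)) * g m
        = ∑ m : Fin (K * 1),
            Complex.exp (2 * (Real.pi:ℂ) * Complex.I * ((n.val:ℂ) - (m.val:ℂ)) * p / (K:ℂ)) * g m := by
      intro p
      rw [Finset.mul_sum]
      refine Finset.sum_congr rfl fun m _ => ?_
      rw [← mul_assoc, ← Complex.exp_add]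
      congr 2
      field_simp
      ring
    simp only [h3]
    rw [Finset.sum_comm]
    have h4 : ∀ m : Fin (K * 1),
        ∑ p : Fin (K * 1),
            Complex.exp (2 * (Real.pi:ℂ) * Complex.I * ((n.val:ℂ) - (m.val:ℂ)) * p / (K:ℂ)) * g m
        = (if ((K : ℕ):ℤ) ∣ ((n.val:ℤ) - (m.val:ℤ)) then ((K:ℕ):ℂ) else 0) * g m := by
      intro m
      have sr := stmt9_sum_root (K * 1) hD ((n.val:ℤ) - (m.val:ℤ))
      simp only [Nat.cast_mul, Nat.cast_one, mul_one] at sr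
      push_cast at sr
      rw [← Finset.sum_mul, sr]
    simp only [h4]
    rw [Finset.sum_eq_single n]
    · rw [if_pos (by simp)]
    · intro m _ hm
      rw [if_neg, zero_mul]
      intro hdvd
      have habs : |(n.val:ℤ) - (m.val:ℤ)| < ((K : ℕ):ℤ) := by
        have := n.isLt; have := m.isLt
        rw [abs_lt]
        omega
      have h0 := Int.eq_zero_of_abs_lt_dvd hdvd habs
      have : n.val = m.val := by omega
      exact hm (Fin.ext this.symm)
    · simp
  rw [eq_div_iff hK']
  linear_combination key

lemma stmt9_dft_conjT (D : ℕ) (n p : Fin D) :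
    (dftMat D)ᴴ n p
      = Complex.exp (2 * (Real.pi:ℂ) * Complex.I * p * n / D) / ((Real.sqrt D : ℝ) : ℂ) := by
  simp only [Matrix.conjTranspose_apply, dftMat, Matrix.of_apply, star_div₀,
    RCLike.star_def, ← Complex.exp_conj, map_div₀, _root_.map_mul, map_neg, map_ofNat,
    Complex.conj_I, Complex.conj_ofReal, map_natCast]
  congr 1
  ring_nf

lemma stmt9_collapse (D : ℕ) (hD : 0 < D) (l : ℕ) (X : Matrix (Fin D) (Fin D) ℂ)
    (n j : Fin D) :
    (X * cycPow D (l : ℤ)) n j = X n ⟨(j.val + l) % D, Nat.mod_lt _ hD⟩ := by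
  haveI : NeZero D := ⟨hD.ne'⟩
  rw [Matrix.mul_apply]
  rw [Finset.sum_eq_single (⟨(j.val + l) % D, Nat.mod_lt _ hD⟩ : Fin D)]
  · rw [cycPow, Matrix.of_apply, if_pos, mul_one]
    push_cast
    rw [ZMod.natCast_mod]
    push_cast
    ring
  · intro p _ hp
    rw [cycPow, Matrix.of_apply, if_neg, mul_zero]
    intro h
    apply hp
    apply Fin.ext
    have h2 : ((p.val : ℕ) : ZMod D) = (((j.val + l) % D : ℕ) : ZMod D) := by
      rw [ZMod.natCast_mod]
      push_cast at h ⊢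
      rw [h]
    have := congrArg ZMod.val h2
    rwa [ZMod.val_cast_of_lt p.isLt, ZMod.val_cast_of_lt (Nat.mod_lt _ hD)] at this
  · simp

lemma stmt9_exp_mod (K : ℕ) (hK : 0 < K) (a n : ℕ) :
    Complex.exp (2 * (Real.pi:ℂ) * Complex.I * ((a % K : ℕ):ℂ) * n / K)
      = Complex.exp (2 * (Real.pi:ℂ) * Complex.I * (a:ℂ) * n / K) := by
  have hK' : (K:ℂ) ≠ 0 := Nat.cast_ne_zero.2 hK.ne'
  have ha : (a:ℂ) = (K:ℂ) * ((a / K : ℕ):ℂ) + ((a % K : ℕ):ℂ) := by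
    exact_mod_cast (Nat.div_add_mod a K).symm
  have h1 : Complex.exp (2 * (Real.pi:ℂ) * Complex.I * (a:ℂ) * n / K)
      = Complex.exp (((a / K * n : ℕ):ℂ) * (2 * (Real.pi:ℂ) * Complex.I)) *
        Complex.exp (2 * (Real.pi:ℂ) * Complex.I * ((a % K : ℕ):ℂ) * n / K) := by
    rw [← Complex.exp_add]
    congr 1
    rw [ha]
    push_cast
    field_simp
  rw [h1, Complex.exp_nat_mul, Complex.exp_two_pi_mul_I, one_pow, one_mul]

/-- OFDM special case: let `M = 1` (so `D = K`) and suppose the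
frequency-domain prototype filter `g_f = √D · W_D · g` has its only (possibly) nonzero
entry `[g_f]_l = c` (`0 ≤ l < D`).  Then the GFDM transmitter matrix of `g` is
`A = (c/√K) · W_Dᴴ · Π_D^l`; in particular every column of `A` is a scalar multiple of
a column of `W_Dᴴ`, i.e. the GFDM system reduces to OFDM. -/

theorem stmt9 (K : ℕ) (hK : 0 < K) (g : Fin (K * 1) → ℂ) (l : ℕ) (hl : l < K * 1)
    (c : ℂ)
    (hgf : ((Real.sqrt (K * 1) : ℝ) : ℂ) • (dftMat (K * 1)).mulVec g
      = fun i => if i.val = l then c else 0) :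
    gfdm K 1 hK one_pos g
      = (c / ((Real.sqrt K : ℝ) : ℂ)) • ((dftMat (K * 1))ᴴ * cycPow (K * 1) (l : ℤ)) ∧
    ∀ j : Fin (K * 1), ∃ (s : ℂ) (p : Fin (K * 1)),
      (fun n => gfdm K 1 hK one_pos g n j) = fun n => s * (dftMat (K * 1))ᴴ n p := by
  have hD : 0 < K * 1 := by omega
  have hKC : (K:ℂ) ≠ 0 := Nat.cast_ne_zero.2 hK.ne'
  have hsK : ((Real.sqrt K : ℝ) : ℂ) ≠ 0 :=
    Complex.ofReal_ne_zero.2 (Real.sqrt_pos.2 (by exact_mod_cast hK)).ne'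
  have hss : ((Real.sqrt K : ℝ) : ℂ) * ((Real.sqrt K : ℝ) : ℂ) = (K:ℂ) := by
    rw [← Complex.ofReal_mul, Real.mul_self_sqrt (Nat.cast_nonneg K)]
    simp
  have hcol : ∀ n j : Fin (K * 1),
      gfdm K 1 hK one_pos g n j
        = (c / ((Real.sqrt K : ℝ) : ℂ)) *
            (dftMat (K * 1))ᴴ n ⟨(j.val + l) % (K * 1), Nat.mod_lt _ hD⟩ := by
    intro n j
    have hjK : j.val < K := by have := j.isLt; omega
    have hnK : n.val < K := by have := n.isLt; omega
    have hidx : (n.val + K * 1 - (j.val / K) * K) % (K * 1) = n.val := by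
      rw [Nat.div_eq_of_lt hjK, Nat.zero_mul, Nat.sub_zero, Nat.add_mod_right,
        Nat.mod_eq_of_lt n.isLt]
    have hfin : (⟨(n.val + K * 1 - (j.val / K) * K) % (K * 1),
        Nat.mod_lt _ (Nat.mul_pos hK one_pos)⟩ : Fin (K * 1)) = n := Fin.ext hidx
    simp only [gfdm, Matrix.of_apply, hfin, Nat.mod_eq_of_lt hjK]
    rw [stmt9_g_eq K hK g l hl c hgf n]
    rw [stmt9_dft_conjT]
    simp only [Nat.mul_one]
    rw [stmt9_exp_mod K hK (j.val + l) n.val]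
    have hexp : Complex.exp (2 * (Real.pi:ℂ) * Complex.I * ((j.val + l : ℕ):ℂ) * n.val / (K:ℂ))
        = Complex.exp (2 * (Real.pi:ℂ) * Complex.I * (l:ℂ) * n.val / (K:ℂ)) *
          Complex.exp (2 * (Real.pi:ℂ) * Complex.I * (j.val:ℂ) * n.val / (K:ℂ)) := by
      rw [← Complex.exp_add]
      congr 1
      push_cast
      field_simp
      ring
    rw [hexp, div_mul_div_comm, hss]
    ring
  constructor
  · ext n j
    rw [Matrix.smul_apply, smul_eq_mul, stmt9_collapse _ hD l, hcol n j]
  · intro j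
    exact ⟨c / ((Real.sqrt K : ℝ) : ℂ), ⟨(j.val + l) % (K * 1), Nat.mod_lt _ hD⟩,
      funext fun n => by rw [hcol n j]⟩
end
end
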